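/- arXiv:1403.6550 — 4 statements merged into one kernel-verified Lean document; each statement's English description precedes it below -/
import Mathlib

section
/- Assume there exist a radius R1 > 0 and a constant C_H > 0 such that σ(B(x, r)) ≤ C_H r^d for all x ∈ M and all r ∈ (0, R1). Fix a real number s with 0 < s < d. Then the mean Riesz s-potential U is Hölder continuous on M with exponent (d − s)/(d + 1): there exist constants C > 0 and t0 > 0 such that |U(x) − U(x')| ≤ C · dist(x, x')^{(d−s)/(d+1)} for all x, x' ∈ M with dist(x, x') ≤ t0. -/
open MeasureTheory Metric Filter Set

lemma aux_near {M : Type*} [MetricSpace M] [MeasurableSpace M] [BorelSpace M]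
    (d : ℕ) (σ : Measure M) [IsProbabilityMeasure σ]
    (R1 CH : ℝ) (hCH : 0 < CH)
    (hup : ∀ (x : M) (r : ℝ), 0 < r → r < R1 → (σ (ball x r)).toReal ≤ CH * r ^ d)
    (s : ℝ) (hs0 : 0 < s) (hsd : s < (d : ℝ))
    (x : M) (δ : ℝ) (hδ : 0 < δ) (hδR : δ < R1) :
    ∫⁻ y in ball x δ, ENNReal.ofReal (dist x y ^ (-s)) ∂σ ≤
      ENNReal.ofReal (CH * (d / ((d : ℝ) - s)) * δ ^ ((d : ℝ) - s)) := by
  have hd0 : (0 : ℝ) < d := hs0.trans hsd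
  have hds : (0 : ℝ) < (d : ℝ) - s := by linarith
  have hmble : Measurable (fun y : M => dist x y ^ (-s)) := by fun_prop
  set T : ℝ := δ ^ (-s) with hT
  have hT0 : 0 < T := Real.rpow_pos_of_pos hδ _
  have hexp : -((d : ℝ) / s) < -1 := by
    rw [neg_lt_neg_iff, lt_div_iff₀ hs0]; linarith
  -- layer cake
  rw [lintegral_eq_lintegral_meas_lt _
    (Eventually.of_forall fun y => Real.rpow_nonneg dist_nonneg _) hmble.aemeasurable]
  have hsplit : Ioi (0:ℝ) = Ioc 0 T ∪ Ioi T := (Ioc_union_Ioi_eq_Ioi hT0.le).symm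
  rw [hsplit, lintegral_union measurableSet_Ioi (Ioc_disjoint_Ioi le_rfl)]
  have hball : σ (ball x δ) ≤ ENNReal.ofReal (CH * δ ^ d) := by
    rw [← ENNReal.ofReal_toReal (measure_ne_top σ _)]
    exact ENNReal.ofReal_le_ofReal (hup x δ hδ hδR)
  -- part 1
  have h1 : ∫⁻ t in Ioc (0:ℝ) T, σ.restrict (ball x δ) {y | t < dist x y ^ (-s)}
      ≤ ENNReal.ofReal (CH * δ ^ ((d:ℝ) - s)) := by
    calc ∫⁻ t in Ioc (0:ℝ) T, σ.restrict (ball x δ) {y | t < dist x y ^ (-s)}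
        ≤ ∫⁻ _ in Ioc (0:ℝ) T, ENNReal.ofReal (CH * δ ^ d) := by
          refine setLIntegral_mono' measurableSet_Ioc fun t _ => ?_
          exact le_trans (le_trans (measure_mono (subset_univ _))
            (le_of_eq (Measure.restrict_apply_univ _))) hball
      _ = ENNReal.ofReal (CH * δ ^ d) * ENNReal.ofReal T := by
          rw [setLIntegral_const, Real.volume_Ioc, sub_zero]
      _ ≤ ENNReal.ofReal (CH * δ ^ ((d:ℝ) - s)) := by
          rw [← ENNReal.ofReal_mul (by positivity)]
          apply ENNReal.ofReal_le_ofReal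
          rw [hT, mul_assoc, ← Real.rpow_natCast δ d, ← Real.rpow_add hδ]
          apply le_of_eq
          congr 1
  -- part 2
  have h2 : ∫⁻ t in Ioi T, σ.restrict (ball x δ) {y | t < dist x y ^ (-s)}
      ≤ ENNReal.ofReal (CH * δ ^ ((d:ℝ) - s) * (s / ((d:ℝ) - s))) := by
    have hpt : ∀ t ∈ Ioi T, σ.restrict (ball x δ) {y | t < dist x y ^ (-s)}
        ≤ ENNReal.ofReal (CH * t ^ (-((d:ℝ)/s))) := by
      intro t ht
      have ht0 : 0 < t := hT0.trans ht
      set ρ : ℝ := t ^ (-(1/s)) with hρ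
      have hρ0 : 0 < ρ := Real.rpow_pos_of_pos ht0 _
      have hss : -(1/s) < 0 := neg_neg_iff_pos.mpr (by positivity)
      have hρδ : ρ < δ := by
        have h' := Real.rpow_lt_rpow_of_neg hT0 ht hss
        calc ρ < T ^ (-(1/s)) := h'
          _ = δ := by
            rw [hT, ← Real.rpow_mul hδ.le,
              show (-s) * (-(1/s)) = 1 by field_simp, Real.rpow_one]
      have hsub : {y : M | t < dist x y ^ (-s)} ⊆ ball x ρ := by
        intro y hy
        simp only [mem_setOf_eq] at hy
        have hdy : 0 < dist x y := by
          rcases eq_or_lt_of_le (dist_nonneg : 0 ≤ dist x y) with h | h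
          · exfalso
            rw [← h, Real.zero_rpow (neg_ne_zero.mpr hs0.ne')] at hy
            exact absurd hy (not_lt.mpr ht0.le)
          · exact h
        have h2' := Real.rpow_lt_rpow_of_neg ht0 hy hss
        rw [← Real.rpow_mul hdy.le, show (-s) * (-(1/s)) = 1 by field_simp,
          Real.rpow_one] at h2'
        rw [mem_ball, dist_comm]
        exact h2'
      calc σ.restrict (ball x δ) {y | t < dist x y ^ (-s)}
          ≤ σ (ball x ρ) := le_trans (Measure.restrict_apply_le _ _)
            (measure_mono hsub)
        _ ≤ ENNReal.ofReal (CH * ρ ^ d) := by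
            rw [← ENNReal.ofReal_toReal (measure_ne_top σ _)]
            exact ENNReal.ofReal_le_ofReal (hup x ρ hρ0 (hρδ.trans hδR))
        _ = ENNReal.ofReal (CH * t ^ (-((d:ℝ)/s))) := by
            congr 1
            rw [hρ, ← Real.rpow_natCast (t ^ (-(1/s))) d, ← Real.rpow_mul ht0.le]
            congr 1
            field_simp
    calc ∫⁻ t in Ioi T, σ.restrict (ball x δ) {y | t < dist x y ^ (-s)}
        ≤ ∫⁻ t in Ioi T, ENNReal.ofReal (CH * t ^ (-((d:ℝ)/s))) :=
          setLIntegral_mono' measurableSet_Ioi hpt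
      _ = ENNReal.ofReal (∫ t in Ioi T, CH * t ^ (-((d:ℝ)/s))) := by
          rw [← ofReal_integral_eq_lintegral_ofReal]
          · exact (integrableOn_Ioi_rpow_of_lt hexp hT0).const_mul CH
          · refine (ae_restrict_iff' measurableSet_Ioi).mpr
              (Eventually.of_forall fun t ht => ?_)
            have ht0 : 0 < t := hT0.trans ht
            positivity
      _ ≤ ENNReal.ofReal (CH * δ ^ ((d:ℝ) - s) * (s / ((d:ℝ) - s))) := by
          apply ENNReal.ofReal_le_ofReal
          rw [integral_const_mul, integral_Ioi_rpow_of_lt hexp hT0]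
          apply le_of_eq
          rw [hT, ← Real.rpow_mul hδ.le,
            show (-s) * (-((d:ℝ)/s) + 1) = (d:ℝ) - s by field_simp; ring]
          have hne : -((d:ℝ)/s) + 1 ≠ 0 := by
            have h1' : (1:ℝ) < (d:ℝ)/s := by rw [lt_div_iff₀ hs0, one_mul]; exact hsd
            linarith
          have hne2 : -(d:ℝ) + s ≠ 0 := by intro h; linarith
          field_simp
          ring
  calc _ ≤ ENNReal.ofReal (CH * δ ^ ((d:ℝ) - s)) +
        ENNReal.ofReal (CH * δ ^ ((d:ℝ) - s) * (s / ((d:ℝ) - s))) := add_le_add h1 h2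
    _ = ENNReal.ofReal (CH * (d / ((d:ℝ) - s)) * δ ^ ((d:ℝ) - s)) := by
        rw [← ENNReal.ofReal_add (by positivity) (by positivity)]
        congr 1
        field_simp
        ring

lemma aux_rpow_lip {s a b m : ℝ} (hs : 0 < s) (hm : 0 < m) (ha : m ≤ a) (hb : m ≤ b) :
    |a ^ (-s) - b ^ (-s)| ≤ (s * m ^ (-s - 1)) * |a - b| := by
  have key : ∀ x ∈ Ici m, HasDerivWithinAt (fun r : ℝ => r ^ (-s))
      ((-s) * x ^ (-s - 1)) (Ici m) x := by
    intro x hx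
    exact (Real.hasDerivAt_rpow_const (Or.inl (lt_of_lt_of_le hm hx).ne')).hasDerivWithinAt
  have bound : ∀ x ∈ Ici m, ‖(-s) * x ^ (-s - 1)‖ ≤ s * m ^ (-s - 1) := by
    intro x hx
    rw [norm_mul, Real.norm_eq_abs, Real.norm_eq_abs, abs_neg, abs_of_pos hs,
      abs_of_pos (Real.rpow_pos_of_pos (lt_of_lt_of_le hm hx) _)]
    exact mul_le_mul_of_nonneg_left
      (Real.rpow_le_rpow_of_nonpos hm hx (by linarith)) hs.le
  have := (convex_Ici m).norm_image_sub_le_of_norm_hasDerivWithin_le key bound hb ha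
  simpa [Real.norm_eq_abs] using this

lemma aux_int {M : Type*} [MetricSpace M] [MeasurableSpace M] [BorelSpace M]
    (d : ℕ) (σ : Measure M) [IsProbabilityMeasure σ]
    (R1 CH : ℝ) (hR1 : 0 < R1) (hCH : 0 < CH)
    (hup : ∀ (x : M) (r : ℝ), 0 < r → r < R1 → (σ (ball x r)).toReal ≤ CH * r ^ d)
    (s : ℝ) (hs0 : 0 < s) (hsd : s < (d : ℝ)) (x : M) :
    Integrable (fun y => dist x y ^ (-s)) σ := by
  have hmble : Measurable (fun y : M => dist x y ^ (-s)) := by fun_prop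
  refine ⟨hmble.aestronglyMeasurable, ?_⟩
  rw [hasFiniteIntegral_iff_ofReal
    (Eventually.of_forall fun y => Real.rpow_nonneg dist_nonneg _)]
  have h2 : (0:ℝ) < R1/2 := by linarith
  rw [← lintegral_add_compl (fun y => ENNReal.ofReal (dist x y ^ (-s)))
    (measurableSet_ball (x := x) (ε := R1/2))]
  have hb : ∫⁻ y in ball x (R1/2), ENNReal.ofReal (dist x y ^ (-s)) ∂σ < ⊤ :=
    lt_of_le_of_lt (aux_near d σ R1 CH hCH hup s hs0 hsd x (R1/2) h2 (by linarith))
      ENNReal.ofReal_lt_top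
  have hc : ∫⁻ y in (ball x (R1/2))ᶜ, ENNReal.ofReal (dist x y ^ (-s)) ∂σ < ⊤ := by
    calc ∫⁻ y in (ball x (R1/2))ᶜ, ENNReal.ofReal (dist x y ^ (-s)) ∂σ
        ≤ ∫⁻ _ in (ball x (R1/2))ᶜ, ENNReal.ofReal ((R1/2) ^ (-s)) ∂σ := by
          refine setLIntegral_mono' (measurableSet_ball.compl) fun y hy => ?_
          apply ENNReal.ofReal_le_ofReal
          have : R1/2 ≤ dist x y := by
            simpa [mem_ball, dist_comm, not_lt] using hy
          exact Real.rpow_le_rpow_of_nonpos h2 this (by linarith)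
      _ ≤ ENNReal.ofReal ((R1/2) ^ (-s)) * σ univ := by
          rw [setLIntegral_const]
          exact mul_le_mul_right (measure_mono (subset_univ _)) _
      _ < ⊤ := by
          rw [measure_univ, mul_one]
          exact ENNReal.ofReal_lt_top
  exact ENNReal.add_lt_top.mpr ⟨hb, hc⟩

lemma aux_near_real {M : Type*} [MetricSpace M] [MeasurableSpace M] [BorelSpace M]
    (d : ℕ) (σ : Measure M) [IsProbabilityMeasure σ]
    (R1 CH : ℝ) (hCH : 0 < CH)
    (hup : ∀ (x : M) (r : ℝ), 0 < r → r < R1 → (σ (ball x r)).toReal ≤ CH * r ^ d)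
    (s : ℝ) (hs0 : 0 < s) (hsd : s < (d : ℝ))
    (x : M) (δ : ℝ) (hδ : 0 < δ) (hδR : δ < R1) :
    ∫ y in ball x δ, dist x y ^ (-s) ∂σ ≤
      CH * (d / ((d : ℝ) - s)) * δ ^ ((d : ℝ) - s) := by
  have hds : (0 : ℝ) < (d : ℝ) - s := by linarith
  have hd0 : (0 : ℝ) < d := hs0.trans hsd
  have hmble : Measurable (fun y : M => dist x y ^ (-s)) := by fun_prop
  rw [integral_eq_lintegral_of_nonneg_ae
    (Eventually.of_forall fun y => Real.rpow_nonneg dist_nonneg _)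
    hmble.aestronglyMeasurable]
  exact ENNReal.toReal_le_of_le_ofReal (by positivity)
    (aux_near d σ R1 CH hCH hup s hs0 hsd x δ hδ hδR)

theorem mean_potential_holder
    {M : Type*} [MetricSpace M] [CompactSpace M] [ConnectedSpace M] [Nontrivial M]
    [MeasurableSpace M] [BorelSpace M]
    (d : ℕ) (hd : 1 ≤ d)
    (σ : Measure M) [IsProbabilityMeasure σ]
    (R1 CH : ℝ) (hR1 : 0 < R1) (hCH : 0 < CH)
    (hup : ∀ (x : M) (r : ℝ), 0 < r → r < R1 → (σ (ball x r)).toReal ≤ CH * r ^ d)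
    (s : ℝ) (hs0 : 0 < s) (hsd : s < d) :
    ∃ C > (0 : ℝ), ∃ t0 > (0 : ℝ), ∀ x x' : M, dist x x' ≤ t0 →
      |(∫ y, dist x y ^ (-s) ∂σ) - ∫ y, dist x' y ^ (-s) ∂σ| ≤
        C * dist x x' ^ (((d : ℝ) - s) / ((d : ℝ) + 1)) := by
  have hd1 : (1:ℝ) ≤ (d:ℝ) := by exact_mod_cast hd
  have hds : (0:ℝ) < (d:ℝ) - s := by linarith
  have hdp1 : (0:ℝ) < (d:ℝ) + 1 := by linarith
  have hR12 : (0:ℝ) < R1/2 := by linarith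
  set K : ℝ := CH * ((d:ℝ) / ((d:ℝ) - s)) with hK
  have hK0 : 0 < K := by
    have : (0:ℝ) < (d:ℝ) := by linarith
    positivity
  refine ⟨K * (1 + 2 ^ ((d:ℝ) - s)) + s * 2 ^ (s + 1), by positivity,
    min (1/4) ((R1/2) ^ ((d:ℝ)+1) / 2), by positivity, ?_⟩
  intro x x' htt0
  set α : ℝ := ((d:ℝ) - s) / ((d:ℝ) + 1) with hα
  have hα0 : 0 < α := by positivity
  set t := dist x x' with htdef
  rcases eq_or_lt_of_le (dist_nonneg : 0 ≤ t) with h0 | ht0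
  · have hxx : x = x' := dist_eq_zero.mp h0.symm
    subst hxx
    rw [sub_self, abs_zero]
    have : (0:ℝ) ≤ t := dist_nonneg
    positivity
  -- main case
  have ht14 : t ≤ 1/4 := le_trans htt0 (min_le_left _ _)
  have htR : t ≤ (R1/2)^((d:ℝ)+1)/2 := le_trans htt0 (min_le_right _ _)
  set δ : ℝ := t ^ (1/((d:ℝ)+1)) with hδdef
  have hδ0 : 0 < δ := Real.rpow_pos_of_pos ht0 _
  have hδR2 : δ < R1/2 := by
    have h1 : t < (R1/2)^((d:ℝ)+1) := by
      have := Real.rpow_pos_of_pos hR12 ((d:ℝ)+1)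
      linarith
    calc δ < ((R1/2)^((d:ℝ)+1)) ^ (1/((d:ℝ)+1)) :=
          Real.rpow_lt_rpow ht0.le h1 (by positivity)
      _ = R1/2 := by
          rw [← Real.rpow_mul hR12.le, mul_one_div, div_self hdp1.ne', Real.rpow_one]
  have h2δR : 2*δ < R1 := by linarith
  have hδR : δ < R1 := by linarith
  -- 2t ≤ δ
  have h2tδ : 2*t ≤ δ := by
    have ht1 : t ≤ 1 := by linarith
    have hsq : t^((1:ℝ)/2) ≤ δ := by
      apply Real.rpow_le_rpow_of_exponent_ge ht0 ht1
      rw [div_le_div_iff₀ hdp1 (by norm_num : (0:ℝ) < 2)]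
      linarith
    have hhalf : ((1:ℝ)/4) ^ ((1:ℝ)/2) = 1/2 := by
      have h4 : ((1:ℝ)/4) = ((1:ℝ)/2) ^ ((2:ℕ):ℝ) := by
        rw [Real.rpow_natCast]; norm_num
      rw [h4, ← Real.rpow_mul (by norm_num : (0:ℝ) ≤ 1/2)]
      norm_num
    have h1 : t^((1:ℝ)/2) ≤ 1/2 := by
      calc t^((1:ℝ)/2) ≤ ((1:ℝ)/4)^((1:ℝ)/2) :=
            Real.rpow_le_rpow ht0.le ht14 (by norm_num)
        _ = 1/2 := hhalf
    have h2 : 2*t = 2 * (t^((1:ℝ)/2) * t^((1:ℝ)/2)) := by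
      rw [← Real.rpow_add ht0]
      norm_num
      exact htdef
    have hnn : 0 ≤ t^((1:ℝ)/2) := Real.rpow_nonneg ht0.le _
    calc 2*t = 2 * (t^((1:ℝ)/2) * t^((1:ℝ)/2)) := h2
      _ ≤ 2 * ((1/2) * t^((1:ℝ)/2)) := by nlinarith
      _ = t^((1:ℝ)/2) := by ring
      _ ≤ δ := hsq
  have htδ : t ≤ δ/2 := by linarith
  -- integrabilities
  have hIx : Integrable (fun y => dist x y ^ (-s)) σ :=
    aux_int d σ R1 CH hR1 hCH hup s hs0 hsd x
  have hIx' : Integrable (fun y => dist x' y ^ (-s)) σ :=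
    aux_int d σ R1 CH hR1 hCH hup s hs0 hsd x'
  set B := ball x δ with hBdef
  have hB : MeasurableSet B := measurableSet_ball
  have hnn : ∀ (z : M), ∀ y : M, 0 ≤ dist z y ^ (-s) :=
    fun z y => Real.rpow_nonneg dist_nonneg _
  -- splitting
  have hsplitx : (∫ y, dist x y ^ (-s) ∂σ) =
      (∫ y in B, dist x y ^ (-s) ∂σ) + ∫ y in Bᶜ, dist x y ^ (-s) ∂σ :=
    (integral_add_compl hB hIx).symm
  have hsplitx' : (∫ y, dist x' y ^ (-s) ∂σ) =
      (∫ y in B, dist x' y ^ (-s) ∂σ) + ∫ y in Bᶜ, dist x' y ^ (-s) ∂σ :=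
    (integral_add_compl hB hIx').symm
  have habs : |(∫ y, dist x y ^ (-s) ∂σ) - ∫ y, dist x' y ^ (-s) ∂σ| ≤
      (∫ y in B, dist x y ^ (-s) ∂σ) + (∫ y in B, dist x' y ^ (-s) ∂σ) +
      |(∫ y in Bᶜ, dist x y ^ (-s) ∂σ) - ∫ y in Bᶜ, dist x' y ^ (-s) ∂σ| := by
    rw [hsplitx, hsplitx']
    have e : (∫ y in B, dist x y ^ (-s) ∂σ) + (∫ y in Bᶜ, dist x y ^ (-s) ∂σ) -
        ((∫ y in B, dist x' y ^ (-s) ∂σ) + ∫ y in Bᶜ, dist x' y ^ (-s) ∂σ) =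
        ((∫ y in B, dist x y ^ (-s) ∂σ) - (∫ y in B, dist x' y ^ (-s) ∂σ)) +
        ((∫ y in Bᶜ, dist x y ^ (-s) ∂σ) - ∫ y in Bᶜ, dist x' y ^ (-s) ∂σ) := by ring
    rw [e]
    refine le_trans (abs_add_le _ _) ?_
    gcongr
    refine le_trans (abs_sub _ _) ?_
    rw [abs_of_nonneg (integral_nonneg (hnn x)), abs_of_nonneg (integral_nonneg (hnn x'))]
  -- bound 1
  have hb1 : (∫ y in B, dist x y ^ (-s) ∂σ) ≤ K * δ ^ ((d:ℝ) - s) :=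
    aux_near_real d σ R1 CH hCH hup s hs0 hsd x δ hδ0 hδR
  -- bound 2
  have hsub2 : B ⊆ ball x' (2*δ) := by
    intro y hy
    rw [hBdef, mem_ball] at hy
    rw [mem_ball]
    calc dist y x' ≤ dist y x + dist x x' := dist_triangle _ _ _
      _ < δ + t := by rw [dist_comm] at hy ⊢; linarith
      _ ≤ 2*δ := by linarith
  have hb2 : (∫ y in B, dist x' y ^ (-s) ∂σ) ≤ K * (2*δ) ^ ((d:ℝ) - s) := by
    calc (∫ y in B, dist x' y ^ (-s) ∂σ)
        ≤ ∫ y in ball x' (2*δ), dist x' y ^ (-s) ∂σ :=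
          setIntegral_mono_set hIx'.integrableOn
            (Eventually.of_forall (hnn x')) (HasSubset.Subset.eventuallyLE hsub2)
      _ ≤ K * (2*δ) ^ ((d:ℝ) - s) :=
          aux_near_real d σ R1 CH hCH hup s hs0 hsd x' (2*δ) (by linarith) h2δR
  -- bound 3
  have hb3 : |(∫ y in Bᶜ, dist x y ^ (-s) ∂σ) - ∫ y in Bᶜ, dist x' y ^ (-s) ∂σ| ≤
      (s * (δ/2) ^ (-s-1) * t) * 1 := by
    rw [← integral_sub hIx.integrableOn hIx'.integrableOn]
    rw [← Real.norm_eq_abs]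
    refine le_trans (norm_setIntegral_le_of_norm_le_const (μ := σ) (C := s * (δ/2) ^ (-s-1) * t)
      (lt_of_le_of_lt (measure_mono (subset_univ _)) (by rw [measure_univ]; exact ENNReal.one_lt_top))
      (fun y hy => ?_)) ?_
    · rw [Real.norm_eq_abs]
      have hyB : δ ≤ dist x y := by
        rw [hBdef, mem_compl_iff, mem_ball, dist_comm, not_lt] at hy
        exact hy
      have ha : δ/2 ≤ dist x y := by linarith
      have hb : δ/2 ≤ dist x' y := by
        have := abs_dist_sub_le x x' y
        rw [abs_le] at this
        linarith [this.1, this.2]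
      calc |dist x y ^ (-s) - dist x' y ^ (-s)|
          ≤ (s * (δ/2) ^ (-s-1)) * |dist x y - dist x' y| :=
            aux_rpow_lip hs0 (by linarith) ha hb
        _ ≤ (s * (δ/2) ^ (-s-1)) * t := by
            have h := abs_dist_sub_le x x' y
            have hpos : 0 ≤ s * (δ/2) ^ (-s-1) := by positivity
            exact mul_le_mul_of_nonneg_left h hpos
        _ = s * (δ/2) ^ (-s-1) * t := by ring
    · have h1 : (σ Bᶜ).toReal ≤ 1 := by
        rw [← ENNReal.toReal_one]
        exact ENNReal.toReal_mono ENNReal.one_ne_top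
          (le_trans (measure_mono (subset_univ _)) (le_of_eq measure_univ))
      have hpos : 0 ≤ s * (δ/2) ^ (-s-1) * t := by positivity
      calc s * (δ/2) ^ (-s-1) * t * (σ Bᶜ).toReal
          ≤ s * (δ/2) ^ (-s-1) * t * 1 := by
            exact mul_le_mul_of_nonneg_left h1 hpos
        _ = (s * (δ/2) ^ (-s-1) * t) * 1 := by ring
  -- exponent arithmetic
  have e1 : δ ^ ((d:ℝ) - s) = t ^ α := by
    rw [hδdef, ← Real.rpow_mul ht0.le]
    congr 1
    rw [hα]
    field_simp
  have e2 : (2*δ) ^ ((d:ℝ) - s) = 2 ^ ((d:ℝ)-s) * t ^ α := by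
    rw [Real.mul_rpow (by norm_num : (0:ℝ) ≤ 2) hδ0.le, e1]
  have e3 : s * (δ/2) ^ (-s-1) * t = s * 2 ^ (s+1) * t ^ α := by
    have e3a : (δ/2 : ℝ) ^ (-s-1) = δ ^ (-(s+1)) * 2 ^ (s+1) := by
      rw [show (-s-1 : ℝ) = -(s+1) by ring,
        Real.div_rpow hδ0.le (by norm_num : (0:ℝ) ≤ 2),
        Real.rpow_neg (by norm_num : (0:ℝ) ≤ 2) (s+1), div_eq_mul_inv, inv_inv]
    have e3b : δ ^ (-(s+1)) * t = t ^ α := by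
      rw [hδdef, ← Real.rpow_mul ht0.le, ← Real.rpow_add_one ht0.ne']
      congr 1
      rw [hα]
      field_simp
      ring
    calc s * (δ/2) ^ (-s-1) * t = s * 2 ^ (s+1) * (δ ^ (-(s+1)) * t) := by
          rw [e3a]; ring
      _ = s * 2 ^ (s+1) * t ^ α := by rw [e3b]
  -- combine
  calc |(∫ y, dist x y ^ (-s) ∂σ) - ∫ y, dist x' y ^ (-s) ∂σ|
      ≤ (∫ y in B, dist x y ^ (-s) ∂σ) + (∫ y in B, dist x' y ^ (-s) ∂σ) +
        |(∫ y in Bᶜ, dist x y ^ (-s) ∂σ) - ∫ y in Bᶜ, dist x' y ^ (-s) ∂σ| := habs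
    _ ≤ K * δ ^ ((d:ℝ) - s) + K * (2*δ) ^ ((d:ℝ) - s) + (s * (δ/2) ^ (-s-1) * t) * 1 := by
        gcongr
    _ = K * t ^ α + K * (2 ^ ((d:ℝ)-s) * t ^ α) + s * 2 ^ (s+1) * t ^ α := by
        rw [e1, e2, mul_one, e3]
    _ = (K * (1 + 2 ^ ((d:ℝ) - s)) + s * 2 ^ (s + 1)) * t ^ α := by ring
end

section
/- Assume the Regularity hypothesis. Fix a real number s with 0 < s < d and a constant γ > 0. Then there exist constants C > 0 and D0 ∈ (0, 1), depending only on d, s, γ, C_bot, C_top and diam(M), with the following property: for every nonempty finite subset X ⊆ M with N := |X| whose distinct points satisfy dist(x, y) > γ N^{−1/d}, and for every D with 1/N < D ≤ D0, γ D^{1/d} < diam(M) and D(X) ≤ D, one has |U_X(x) − U(x)| ≤ C · D^{1−s/d} for every x ∈ X. -/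
open MeasureTheory Metric Filter

/-- Normalized ball discrepancy of a finite point set `X` with respect to `σ`. -/
noncomputable def ballDisc {M : Type*} [MetricSpace M] [MeasurableSpace M]
    (σ : Measure M) (X : Finset M) : ℝ :=
  ⨆ y : M, ⨆ r : Set.Ioi (0 : ℝ),
    |(((X : Set M) ∩ ball y (r : ℝ)).ncard : ℝ) / X.card - (σ (ball y (r : ℝ))).toReal|

/-- Mean Riesz `s`-potential of the finite set `X` at `x`, excluding `x`. -/
noncomputable def meanPotentialX {M : Type*} [MetricSpace M] (s : ℝ) (X : Finset M)
    (x : M) : ℝ :=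
  letI := Classical.decEq M
  (1 / (X.card : ℝ)) * ∑ y ∈ X.erase x, dist x y ^ (-s)

attribute [local instance] Classical.propDecidable

set_option maxHeartbeats 1000000


lemma layer0 (c T : ℝ) (hc : 0 ≤ c) (hcT : c ≤ T) :
    ∫ t in Set.Ioo (0:ℝ) T, (if t < c then (1:ℝ) else 0) = c := by
  have h1 : (fun t : ℝ => if t < c then (1:ℝ) else 0)
      = (Set.Iio c).indicator (fun _ => (1:ℝ)) := by
    funext t; by_cases h : t < c <;> simp [Set.indicator, h]
  rw [h1, setIntegral_indicator measurableSet_Iio]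
  have h2 : Set.Ioo (0:ℝ) T ∩ Set.Iio c = Set.Ioo 0 c := by
    ext t; constructor
    · rintro ⟨⟨h1', h2'⟩, h3⟩; exact ⟨h1', h3⟩
    · rintro ⟨h1', h3⟩; exact ⟨⟨h1', lt_of_lt_of_le h3 hcT⟩, h3⟩
  rw [h2, setIntegral_const, measureReal_def, Real.volume_Ioo, smul_eq_mul, mul_one,
    ENNReal.toReal_ofReal (by linarith)]
  simp

lemma auxNearSum {M : Type*} [MetricSpace M]
    (d : ℕ) (hd : 1 ≤ d) (s : ℝ) (hs0 : 0 < s) (hsd : s < d)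
    (A η : ℝ) (hA : 0 < A) (hη0 : 0 < η)
    (X : Finset M) (x : M)
    (hsep : ∀ y ∈ X, y ≠ x → dist x y > η)
    (hpack : ∀ u : ℝ, η / 2 ≤ u →
      ((X.filter (· ∈ ball x u)).card : ℝ) ≤ A * X.card * u ^ d) :
    ∀ (n : ℕ) (u : ℝ), 0 < u → u ≤ η * 2 ^ n →
      (∑ y ∈ X.filter (fun y => 0 < dist x y ∧ dist x y < u), dist x y ^ (-s))
        ≤ (A * 2 ^ s / (1 - 2 ^ (s - (d:ℝ)))) * X.card * u ^ ((d:ℝ) - s) := by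
  classical
  set ξ : ℝ := (2:ℝ) ^ (s - (d:ℝ)) with hξdef
  have hξ0 : 0 < ξ := Real.rpow_pos_of_pos (by norm_num) _
  have hξ1 : ξ < 1 := Real.rpow_lt_one_of_one_lt_of_neg (by norm_num) (by linarith)
  set B : ℝ := A * 2 ^ s / (1 - ξ) with hBdef
  have hBpos : 0 < B := div_pos (by positivity) (by linarith)
  set g : ℝ → ℝ := fun u =>
    ∑ y ∈ X.filter (fun y => 0 < dist x y ∧ dist x y < u), dist x y ^ (-s) with hgdef
  have hgsmall : ∀ u : ℝ, u ≤ η → g u = 0 := by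
    intro u hu
    have : X.filter (fun y => 0 < dist x y ∧ dist x y < u) = ∅ := by
      apply Finset.filter_eq_empty_iff.mpr
      rintro y hy ⟨h1, h2⟩
      have hyx : y ≠ x := fun h => by simp [h] at h1
      have := hsep y hy hyx
      linarith
    simp only [hgdef, this, Finset.sum_empty]
  intro n
  induction n with
  | zero =>
    intro u hu0 hun
    show g u ≤ B * X.card * u ^ ((d:ℝ) - s)
    rw [hgsmall u (by simpa using hun)]
    positivity
  | succ n ih =>
    intro u hu0 hun
    show g u ≤ B * X.card * u ^ ((d:ℝ) - s)
    by_cases hcase : u ≤ η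
    · rw [hgsmall u hcase]; positivity
    push_neg at hcase
    have hu2 : 0 < u / 2 := by linarith
    rw [pow_succ] at hun
    have hun2 : u / 2 ≤ η * 2 ^ n := by linarith
    have ihu := ih (u/2) hu2 hun2
    -- split the sum
    have hsum := Finset.sum_filter_add_sum_filter_not
      (X.filter (fun y => 0 < dist x y ∧ dist x y < u))
      (fun y => dist x y < u/2) (fun y => dist x y ^ (-s))
    have hfirst : (X.filter (fun y => 0 < dist x y ∧ dist x y < u)).filter
        (fun y => dist x y < u/2) = X.filter (fun y => 0 < dist x y ∧ dist x y < u/2) := by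
      rw [Finset.filter_filter]
      apply Finset.filter_congr
      intro y _
      constructor
      · rintro ⟨⟨a, b⟩, c⟩; exact ⟨a, c⟩
      · rintro ⟨a, c⟩; exact ⟨⟨a, by linarith⟩, c⟩
    have hsecond : (∑ y ∈ (X.filter (fun y => 0 < dist x y ∧ dist x y < u)).filter
        (fun y => ¬ dist x y < u/2), dist x y ^ (-s))
        ≤ (A * X.card * u ^ d) * (u/2) ^ (-s) := by
      calc (∑ y ∈ (X.filter (fun y => 0 < dist x y ∧ dist x y < u)).filter
          (fun y => ¬ dist x y < u/2), dist x y ^ (-s))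
          ≤ ((X.filter (fun y => 0 < dist x y ∧ dist x y < u)).filter
            (fun y => ¬ dist x y < u/2)).card • ((u/2) ^ (-s)) := by
            apply Finset.sum_le_card_nsmul
            intro y hy
            have h1 : ¬ dist x y < u/2 := (Finset.mem_filter.mp hy).2
            exact Real.rpow_le_rpow_of_nonpos hu2 (not_lt.mp h1) (neg_nonpos.mpr hs0.le)
        _ ≤ ((X.filter (· ∈ ball x u)).card : ℝ) * ((u/2) ^ (-s)) := by
            rw [nsmul_eq_mul]
            apply mul_le_mul_of_nonneg_right _ (Real.rpow_nonneg hu2.le _)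
            have hsub : (X.filter (fun y => 0 < dist x y ∧ dist x y < u)).filter
                (fun y => ¬ dist x y < u/2) ⊆ X.filter (· ∈ ball x u) := by
              intro y hy
              have h1 := Finset.mem_filter.mp (Finset.mem_filter.mp hy).1
              exact Finset.mem_filter.mpr ⟨h1.1, by rw [mem_ball, dist_comm]; exact h1.2.2⟩
            exact_mod_cast Finset.card_le_card hsub
        _ ≤ (A * X.card * u ^ d) * ((u/2) ^ (-s)) := by
            apply mul_le_mul_of_nonneg_right _ (Real.rpow_nonneg hu2.le _)
            exact hpack u (by linarith)
    have hgsplit : g u ≤ g (u/2) + (A * X.card * u ^ d) * (u/2) ^ (-s) := by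
      rw [hgdef]
      calc (∑ y ∈ X.filter (fun y => 0 < dist x y ∧ dist x y < u), dist x y ^ (-s))
          = _ + _ := hsum.symm
        _ ≤ g (u/2) + (A * X.card * u ^ d) * (u/2) ^ (-s) := by
            apply add_le_add _ hsecond
            rw [hfirst]
    -- algebra
    have e1 : (u/2) ^ ((d:ℝ) - s) = u ^ ((d:ℝ) - s) * ξ := by
      rw [show u/2 = u * 2⁻¹ by ring, Real.mul_rpow hu0.le (by norm_num),
        Real.inv_rpow (by norm_num), ← Real.rpow_neg (by norm_num), neg_sub]
    have e2 : (u/2) ^ (-s) = u ^ (-s) * 2 ^ s := by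
      rw [show u/2 = u * 2⁻¹ by ring, Real.mul_rpow hu0.le (by norm_num),
        Real.inv_rpow (by norm_num), ← Real.rpow_neg (by norm_num), neg_neg]
    have e3 : u ^ d * u ^ (-s) = u ^ ((d:ℝ) - s) := by
      rw [← Real.rpow_natCast u d, ← Real.rpow_add hu0, sub_eq_add_neg]
    have e4 : B * (1 - ξ) = A * 2 ^ s := by
      rw [hBdef, div_mul_cancel₀ _ (ne_of_gt (by linarith : (0:ℝ) < 1 - ξ))]
    have hfinal : g (u/2) + (A * X.card * u ^ d) * (u/2) ^ (-s)
        ≤ B * X.card * u ^ ((d:ℝ) - s) := by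
      have expand : (A * X.card * u ^ d) * ((u/2) ^ (-s))
          = (A * 2 ^ s) * X.card * u ^ ((d:ℝ) - s) := by
        rw [e2, show (A * (X.card:ℝ) * u ^ d) * (u ^ (-s) * 2 ^ s)
          = (A * 2^s) * X.card * (u^d * u^(-s)) by ring, e3]
      rw [expand]
      calc g (u/2) + (A * 2 ^ s) * X.card * u ^ ((d:ℝ) - s)
          ≤ B * X.card * (u ^ ((d:ℝ) - s) * ξ) + (A * 2 ^ s) * X.card * u ^ ((d:ℝ) - s) := by
            apply add_le_add_left
            rw [← e1]; exact ihu
        _ = (B * ξ + A * 2 ^ s) * X.card * u ^ ((d:ℝ) - s) := by ring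
        _ = B * X.card * u ^ ((d:ℝ) - s) := by
            have : B * ξ + A * 2 ^ s = B := by linarith [e4]
            rw [this]
    exact le_trans hgsplit hfinal

lemma auxSigma {M : Type*} [MetricSpace M] [MeasurableSpace M] [BorelSpace M]
    (σ : Measure M) [IsProbabilityMeasure σ] (d : ℕ) (hd : 1 ≤ d)
    (s : ℝ) (hs0 : 0 < s) (hsd : s < d) (Ctop' : ℝ) (hCtop' : 0 < Ctop') (x : M)
    (htop : ∀ (c : M) (r : ℝ), 0 < r → (σ (ball c r)).toReal ≤ Ctop' * r ^ d) :
    (∀ u : ℝ, 0 < u →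
      ∫⁻ y in ball x u, ENNReal.ofReal (dist x y ^ (-s)) ∂σ
        ≤ ENNReal.ofReal ((Ctop' * 2 ^ s / (1 - 2 ^ (s - (d:ℝ)))) * u ^ ((d:ℝ) - s)))
    ∧ Integrable (fun y => dist x y ^ (-s)) σ := by
  classical
  set ξ : ℝ := (2:ℝ) ^ (s - (d:ℝ)) with hξdef
  have hξ0 : 0 < ξ := Real.rpow_pos_of_pos (by norm_num) _
  have hξ1 : ξ < 1 := Real.rpow_lt_one_of_one_lt_of_neg (by norm_num) (by linarith)
  set B' : ℝ := Ctop' * 2 ^ s / (1 - ξ) with hBdef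
  have hB'pos : 0 < B' := div_pos (by positivity) (by linarith)
  set f : M → ℝ := fun y => dist x y ^ (-s) with hfdef
  have hf0 : ∀ y, 0 ≤ f y := fun y => Real.rpow_nonneg dist_nonneg _
  have hdx : Continuous (fun y : M => dist x y) := Continuous.dist continuous_const continuous_id
  have hfm : Measurable f := by
    have h1 : f = fun y => ((dist x y) ^ s)⁻¹ := by
      funext y; rw [hfdef]; exact Real.rpow_neg dist_nonneg s
    rw [h1]
    exact ((hdx.rpow_const (fun y => Or.inr hs0.le)).measurable).inv
  set F : M → ENNReal := fun y => ENNReal.ofReal (f y) with hFdef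
  have hFm : Measurable F := hfm.ennreal_ofReal
  set Sn : ℕ → ℝ → Set M := fun n u => {y : M | u / 2 ^ n ≤ dist x y ∧ dist x y < u}
    with hSndef
  have hSnm : ∀ n u, MeasurableSet (Sn n u) := by
    intro n u
    have : Sn n u = (fun y => dist x y) ⁻¹' (Set.Ico (u / 2^n) u) := rfl
    rw [this]
    exact hdx.measurable measurableSet_Ico
  -- annulus estimate
  have hann : ∀ u : ℝ, 0 < u →
      ∫⁻ y in {y : M | u/2 ≤ dist x y ∧ dist x y < u}, F y ∂σ
        ≤ ENNReal.ofReal (Ctop' * 2 ^ s * u ^ ((d:ℝ) - s)) := by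
    intro u hu0
    have hu2 : 0 < u/2 := by linarith
    set T := {y : M | u/2 ≤ dist x y ∧ dist x y < u} with hTdef
    have hTm : MeasurableSet T := by
      have : T = (fun y => dist x y) ⁻¹' (Set.Ico (u/2) u) := rfl
      rw [this]; exact hdx.measurable measurableSet_Ico
    have h1 : ∫⁻ y in T, F y ∂σ ≤ ∫⁻ _y in T, ENNReal.ofReal ((u/2) ^ (-s)) ∂σ := by
      apply setLIntegral_mono (by measurability)
      intro y hy
      apply ENNReal.ofReal_le_ofReal
      exact Real.rpow_le_rpow_of_nonpos hu2 hy.1 (neg_nonpos.mpr hs0.le)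
    have h2 : ∫⁻ _y in T, ENNReal.ofReal ((u/2) ^ (-s)) ∂σ
        = ENNReal.ofReal ((u/2) ^ (-s)) * σ T := setLIntegral_const T _
    have h3 : σ T ≤ ENNReal.ofReal (Ctop' * u ^ d) := by
      have hsub : T ⊆ ball x u := by
        intro y hy; rw [mem_ball, dist_comm]; exact hy.2
      calc σ T ≤ σ (ball x u) := measure_mono hsub
        _ = ENNReal.ofReal ((σ (ball x u)).toReal) := (ENNReal.ofReal_toReal (measure_ne_top σ _)).symm
        _ ≤ ENNReal.ofReal (Ctop' * u ^ d) := ENNReal.ofReal_le_ofReal (htop x u hu0)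
    calc ∫⁻ y in T, F y ∂σ ≤ ENNReal.ofReal ((u/2) ^ (-s)) * σ T := le_trans h1 (le_of_eq h2)
      _ ≤ ENNReal.ofReal ((u/2) ^ (-s)) * ENNReal.ofReal (Ctop' * u ^ d) :=
          mul_le_mul_right h3 _
      _ = ENNReal.ofReal ((u/2) ^ (-s) * (Ctop' * u ^ d)) :=
          (ENNReal.ofReal_mul (Real.rpow_nonneg hu2.le _)).symm
      _ = ENNReal.ofReal (Ctop' * 2 ^ s * u ^ ((d:ℝ) - s)) := by
          congr 1
          have e2 : (u/2) ^ (-s) = u ^ (-s) * 2 ^ s := by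
            rw [show u/2 = u * 2⁻¹ by ring, Real.mul_rpow hu0.le (by norm_num),
              Real.inv_rpow (by norm_num), ← Real.rpow_neg (by norm_num), neg_neg]
          have e3 : u ^ d * u ^ (-s) = u ^ ((d:ℝ) - s) := by
            rw [← Real.rpow_natCast u d, ← Real.rpow_add hu0, sub_eq_add_neg]
          rw [e2, ← e3]; ring
  -- induction over dyadic shells
  have hind : ∀ (n : ℕ) (u : ℝ), 0 < u →
      ∫⁻ y in Sn n u, F y ∂σ ≤ ENNReal.ofReal (B' * u ^ ((d:ℝ) - s)) := by
    intro n
    induction n with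
    | zero =>
      intro u hu0
      have hempty : Sn 0 u = ∅ := by
        ext y
        constructor
        · rintro ⟨h1, h2⟩
          rw [pow_zero, div_one] at h1
          exact absurd h2 (not_lt.mpr h1)
        · intro h; exact absurd h (Set.notMem_empty y)
      rw [hempty]
      simp only [Measure.restrict_empty, lintegral_zero_measure]
      exact zero_le
    | succ n ih =>
      intro u hu0
      have hu2 : 0 < u/2 := by linarith
      have hsub : Sn (n+1) u ⊆ Sn n (u/2) ∪ {y : M | u/2 ≤ dist x y ∧ dist x y < u} := by
        intro y hy
        obtain ⟨h1, h2⟩ := hy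
        by_cases h : dist x y < u/2
        · left
          refine ⟨?_, h⟩
          calc u/2 / 2^n = u / 2^(n+1) := by rw [pow_succ]; ring
            _ ≤ dist x y := h1
        · right; exact ⟨not_lt.mp h, h2⟩
      calc ∫⁻ y in Sn (n+1) u, F y ∂σ
          ≤ ∫⁻ y in Sn n (u/2) ∪ {y : M | u/2 ≤ dist x y ∧ dist x y < u}, F y ∂σ :=
            lintegral_mono_set hsub
        _ ≤ (∫⁻ y in Sn n (u/2), F y ∂σ)
            + ∫⁻ y in {y : M | u/2 ≤ dist x y ∧ dist x y < u}, F y ∂σ :=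
            lintegral_union_le _ _ _
        _ ≤ ENNReal.ofReal (B' * (u/2) ^ ((d:ℝ) - s))
            + ENNReal.ofReal (Ctop' * 2 ^ s * u ^ ((d:ℝ) - s)) :=
            add_le_add (ih (u/2) hu2) (hann u hu0)
        _ = ENNReal.ofReal (B' * (u/2) ^ ((d:ℝ) - s) + Ctop' * 2 ^ s * u ^ ((d:ℝ) - s)) := by
            rw [ENNReal.ofReal_add (by positivity) (by positivity)]
        _ ≤ ENNReal.ofReal (B' * u ^ ((d:ℝ) - s)) := by
            apply ENNReal.ofReal_le_ofReal
            have e1 : (u/2) ^ ((d:ℝ) - s) = u ^ ((d:ℝ) - s) * ξ := by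
              rw [show u/2 = u * 2⁻¹ by ring, Real.mul_rpow hu0.le (by norm_num),
                Real.inv_rpow (by norm_num), ← Real.rpow_neg (by norm_num), neg_sub]
            have e4 : B' * (1 - ξ) = Ctop' * 2 ^ s := by
              rw [hBdef, div_mul_cancel₀ _ (ne_of_gt (by linarith : (0:ℝ) < 1 - ξ))]
            have hup : (0:ℝ) < u ^ ((d:ℝ) - s) := Real.rpow_pos_of_pos hu0 _
            rw [e1]
            nlinarith [hup]
  -- main ball bound
  have hball : ∀ u : ℝ, 0 < u →
      ∫⁻ y in ball x u, F y ∂σ ≤ ENNReal.ofReal (B' * u ^ ((d:ℝ) - s)) := by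
    intro u hu0
    have hpoint : ∀ y, (ball x u).indicator F y = ⨆ n, (Sn n u).indicator F y := by
      intro y
      by_cases hmem : y ∈ ball x u
      · have hdlt : dist x y < u := by rw [dist_comm]; exact mem_ball.mp hmem
        by_cases hd0 : 0 < dist x y
        · obtain ⟨n, hn⟩ := pow_unbounded_of_one_lt (u / dist x y) (by norm_num : (1:ℝ) < 2)
          have hyn : y ∈ Sn n u := by
            refine ⟨?_, hdlt⟩
            rw [div_le_iff₀ (by positivity)] at *
            rw [div_lt_iff₀ hd0] at hn
            nlinarith
          apply le_antisymm
          · rw [Set.indicator_of_mem hmem]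
            exact le_iSup_of_le n (by rw [Set.indicator_of_mem hyn])
          · apply iSup_le
            intro m
            calc (Sn m u).indicator F y ≤ F y := Set.indicator_le_self _ _ y
              _ = (ball x u).indicator F y := (Set.indicator_of_mem hmem F).symm
        · have hF0 : F y = 0 := by
            push_neg at hd0
            have : dist x y = 0 := le_antisymm hd0 dist_nonneg
            simp [hFdef, hfdef, this, Real.zero_rpow (ne_of_lt (neg_neg_of_pos hs0))]
          apply le_antisymm
          · rw [Set.indicator_of_mem hmem, hF0]; exact zero_le
          · apply iSup_le; intro m
            calc (Sn m u).indicator F y ≤ F y := Set.indicator_le_self _ _ y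
              _ = 0 := hF0
              _ ≤ _ := zero_le
      · rw [Set.indicator_of_notMem hmem]
        apply le_antisymm (zero_le)
        apply iSup_le; intro m
        have : y ∉ Sn m u := by
          intro hy
          apply hmem
          rw [mem_ball, dist_comm]
          exact hy.2
        rw [Set.indicator_of_notMem this]
    calc ∫⁻ y in ball x u, F y ∂σ = ∫⁻ y, (ball x u).indicator F y ∂σ :=
          (lintegral_indicator measurableSet_ball F).symm
      _ = ∫⁻ y, ⨆ n, (Sn n u).indicator F y ∂σ := by
          congr 1; funext y; exact hpoint y
      _ = ⨆ n, ∫⁻ y, (Sn n u).indicator F y ∂σ := by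
          apply lintegral_iSup
          · intro n; exact hFm.indicator (hSnm n u)
          · apply monotone_nat_of_le_succ
            intro n y
            apply Set.indicator_le_indicator_of_subset _ (fun z => zero_le)
            intro z hz
            refine ⟨le_trans ?_ hz.1, hz.2⟩
            exact div_le_div_of_nonneg_left hu0.le (by positivity)
              (pow_le_pow_right₀ (by norm_num) (by omega))
      _ ≤ ENNReal.ofReal (B' * u ^ ((d:ℝ) - s)) := by
          apply iSup_le
          intro n
          rw [lintegral_indicator (hSnm n u)]
          exact hind n u hu0
  constructor
  · exact hball
  · refine ⟨hfm.aestronglyMeasurable, ?_⟩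
    rw [hasFiniteIntegral_iff_ofReal (Filter.Eventually.of_forall hf0)]
    have hsplit := lintegral_add_compl (μ := σ) (fun y => F y) (measurableSet_ball (x := x) (ε := 1))
    rw [← hsplit]
    have h1 : ∫⁻ y in ball x 1, F y ∂σ ≤ ENNReal.ofReal (B' * 1 ^ ((d:ℝ) - s)) :=
      hball 1 one_pos
    have h2 : ∫⁻ y in (ball x 1)ᶜ, F y ∂σ ≤ ENNReal.ofReal 1 * σ (ball x 1)ᶜ := by
      calc ∫⁻ y in (ball x 1)ᶜ, F y ∂σ ≤ ∫⁻ _y in (ball x 1)ᶜ, ENNReal.ofReal 1 ∂σ := by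
            apply setLIntegral_mono (by measurability)
            intro y hy
            apply ENNReal.ofReal_le_ofReal
            have : (1:ℝ) ≤ dist x y := by
              rw [Set.mem_compl_iff, mem_ball, not_lt, dist_comm] at hy
              exact hy
            calc f y = dist x y ^ (-s) := rfl
              _ ≤ 1 ^ (-s) := Real.rpow_le_rpow_of_nonpos one_pos this (neg_nonpos.mpr hs0.le)
              _ = 1 := Real.one_rpow _
        _ = ENNReal.ofReal 1 * σ (ball x 1)ᶜ := setLIntegral_const _ _
    apply lt_of_le_of_lt (add_le_add h1 h2)
    apply ENNReal.add_lt_top.mpr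
    constructor
    · exact ENNReal.ofReal_lt_top
    · exact lt_of_le_of_lt (mul_le_mul_right prob_le_one _) (by simp)

lemma auxFar {M : Type*} [MetricSpace M] [MeasurableSpace M] [BorelSpace M]
    (σ : Measure M) [IsProbabilityMeasure σ]
    (s : ℝ) (hs0 : 0 < s) (X : Finset M) (hXne : X.Nonempty) (x : M)
    (D ρ : ℝ) (hρ0 : 0 < ρ) (hD0 : 0 < D)
    (hdisc' : ∀ (y : M) (r : ℝ), 0 < r →
      |((X.filter (· ∈ ball y r)).card : ℝ) / X.card - (σ (ball y r)).toReal| ≤ D) :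
    |(1 / (X.card:ℝ)) * ∑ y ∈ X, (if ρ ≤ dist x y then dist x y ^ (-s) else 0)
      - ∫ y, (if ρ ≤ dist x y then dist x y ^ (-s) else 0) ∂σ| ≤ 2 * D * ρ ^ (-s) := by
  classical
  have hNR : (0:ℝ) < X.card := by exact_mod_cast Finset.card_pos.mpr hXne
  set f : M → ℝ := fun y => dist x y ^ (-s) with hfdef
  set φ : M → ℝ := fun y => if ρ ≤ dist x y then f y else 0 with hφdef
  set T : ℝ := ρ ^ (-s) with hTdef
  have hT0 : 0 < T := Real.rpow_pos_of_pos hρ0 _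
  set rfn : ℝ → ℝ := fun t => t ^ (-s⁻¹) with hrfndef
  have hrfnpos : ∀ t : ℝ, 0 < t → 0 < rfn t := fun t ht => Real.rpow_pos_of_pos ht _
  have htid : ∀ t : ℝ, 0 < t → (rfn t) ^ (-s) = t := by
    intro t ht
    rw [hrfndef]
    rw [← Real.rpow_mul ht.le]
    rw [show -s⁻¹ * -s = s⁻¹ * s by ring, inv_mul_cancel₀ (ne_of_gt hs0), Real.rpow_one]
  have hlt_iff : ∀ (t : ℝ), 0 < t → ∀ (w : ℝ), 0 < w → (t < w ^ (-s) ↔ w < rfn t) := by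
    intro t ht w hw
    constructor
    · intro h
      exact (Real.rpow_lt_rpow_iff_of_neg (hrfnpos t ht) hw (neg_lt_zero.mpr hs0)).mp
        (by rwa [htid t ht])
    · intro h
      have := (Real.rpow_lt_rpow_iff_of_neg (hrfnpos t ht) hw (neg_lt_zero.mpr hs0)).mpr h
      rwa [htid t ht] at this
  -- basic bounds on φ
  have hf0 : ∀ y, 0 ≤ f y := fun y => Real.rpow_nonneg dist_nonneg _
  have hφ0 : ∀ y, 0 ≤ φ y := by
    intro y; rw [hφdef]
    by_cases h : ρ ≤ dist x y <;> simp [h, hf0 y]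
  have hφT : ∀ y, φ y ≤ T := by
    intro y; rw [hφdef, hTdef]
    by_cases h : ρ ≤ dist x y
    · simp only [h, if_true]
      exact Real.rpow_le_rpow_of_nonpos hρ0 h (neg_nonpos.mpr hs0.le)
    · simp only [h, if_false]
      exact (Real.rpow_pos_of_pos hρ0 _).le
  -- measurability of φ
  have hdx : Continuous (fun y : M => dist x y) := Continuous.dist continuous_const continuous_id
  have hfm : Measurable f := by
    have h1 : f = fun y => ((dist x y) ^ s)⁻¹ := by
      funext y; rw [hfdef]; exact Real.rpow_neg dist_nonneg s
    rw [h1]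
    exact ((hdx.rpow_const (fun y => Or.inr hs0.le)).measurable).inv
  have hφm : Measurable φ := by
    apply Measurable.ite _ hfm measurable_const
    exact measurableSet_le measurable_const hdx.measurable
  -- the key iff
  have hiff : ∀ (t : ℝ), 0 < t → ∀ y, (t < φ y ↔ (dist x y < rfn t ∧ ¬ dist x y < ρ)) := by
    intro t ht y
    rw [hφdef]
    by_cases h : ρ ≤ dist x y
    · simp only [h, if_true, not_lt.mpr h, not_false_iff, and_true]
      exact hlt_iff t ht (dist x y) (lt_of_lt_of_le hρ0 h)
    · simp only [h, if_false]
      constructor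
      · intro hc; exact absurd hc (not_lt.mpr ht.le)
      · rintro ⟨-, hc⟩; exact absurd (not_le.mp h) hc
  have hρrfn : ∀ t : ℝ, 0 < t → t < T → ρ < rfn t := by
    intro t ht htT
    exact (hlt_iff t ht ρ hρ0).mp htT
  -- instances
  haveI hfinres : IsFiniteMeasure (volume.restrict (Set.Ioo (0:ℝ) T)) := by
    constructor
    rw [Measure.restrict_apply_univ, Real.volume_Ioo]
    exact ENNReal.ofReal_lt_top
  -- Step A : X side
  have hint1 : ∀ y : M, Integrable (fun t => if t < φ y then (1:ℝ) else 0)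
      (volume.restrict (Set.Ioo (0:ℝ) T)) := by
    intro y
    have h1 : (fun t : ℝ => if t < φ y then (1:ℝ) else 0)
        = (Set.Iio (φ y)).indicator (fun _ => (1:ℝ)) := by
      funext t; by_cases h : t < φ y <;> simp [Set.indicator, h]
    rw [h1]
    exact (integrable_const 1).indicator measurableSet_Iio
  have hXrep : ∑ y ∈ X, φ y
      = ∫ t in Set.Ioo (0:ℝ) T, ((X.filter (fun y => t < φ y)).card : ℝ) := by
    have h1 : ∀ y ∈ X, φ y = ∫ t in Set.Ioo (0:ℝ) T, (if t < φ y then (1:ℝ) else 0) :=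
      fun y _ => (layer0 _ _ (hφ0 y) (hφT y)).symm
    rw [Finset.sum_congr rfl h1, ← integral_finset_sum X (fun y _ => hint1 y)]
    apply setIntegral_congr_fun measurableSet_Ioo
    intro t _
    exact Finset.sum_boole _ _
  -- Step B : σ side
  set G : M × ℝ → ℝ := fun p => if p.2 < φ p.1 then 1 else 0 with hGdef
  have hSmeas : MeasurableSet {p : M × ℝ | p.2 < φ p.1} :=
    measurableSet_lt measurable_snd (hφm.comp measurable_fst)
  have hGeq : G = ({p : M × ℝ | p.2 < φ p.1}).indicator (fun _ => (1:ℝ)) := by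
    funext p; by_cases h : p.2 < φ p.1 <;> simp [hGdef, Set.indicator, h]
  have hGint : Integrable G (σ.prod (volume.restrict (Set.Ioo (0:ℝ) T))) := by
    rw [hGeq]
    exact (integrable_const 1).indicator hSmeas
  have hinner : ∀ t : ℝ, (∫ y, (if t < φ y then (1:ℝ) else 0) ∂σ)
      = (σ {y | t < φ y}).toReal := by
    intro t
    have h1 : (fun y => if t < φ y then (1:ℝ) else 0)
        = ({y | t < φ y}).indicator (fun _ => (1:ℝ)) := by
      funext y; by_cases h : t < φ y <;> simp [Set.indicator, h]
    have h2 : MeasurableSet {y : M | t < φ y} := measurableSet_lt measurable_const hφm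
    rw [h1, integral_indicator h2, setIntegral_const, smul_eq_mul, mul_one, measureReal_def]
  have hσrep : ∫ y, φ y ∂σ = ∫ t in Set.Ioo (0:ℝ) T, (σ {y | t < φ y}).toReal := by
    have h1 : ∫ y, φ y ∂σ
        = ∫ y, (∫ t in Set.Ioo (0:ℝ) T, (if t < φ y then (1:ℝ) else 0)) ∂σ := by
      apply integral_congr_ae
      apply Filter.Eventually.of_forall
      intro y
      exact (layer0 _ _ (hφ0 y) (hφT y)).symm
    rw [h1, integral_integral_swap (by exact hGint)]
    apply setIntegral_congr_fun measurableSet_Ioo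
    intro t _
    exact hinner t
  -- integrability of both marginals
  have hg1int : Integrable (fun t => ((X.filter (fun y => t < φ y)).card : ℝ))
      (volume.restrict (Set.Ioo (0:ℝ) T)) := by
    have h1 : (fun t => ((X.filter (fun y => t < φ y)).card : ℝ))
        = fun t => ∑ y ∈ X, (if t < φ y then (1:ℝ) else 0) := by
      funext t; rw [Finset.sum_boole]
    rw [h1]
    exact integrable_finset_sum X (fun y _ => hint1 y)
  have hg2int : Integrable (fun t => (σ {y | t < φ y}).toReal)
      (volume.restrict (Set.Ioo (0:ℝ) T)) := by
    have h1 := hGint.integral_prod_right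
    apply h1.congr
    apply Filter.Eventually.of_forall
    intro t
    exact hinner t
  -- Step C : pointwise bound
  have hpt : ∀ t ∈ Set.Ioo (0:ℝ) T,
      |((X.filter (fun y => t < φ y)).card : ℝ) / X.card - (σ {y | t < φ y}).toReal|
        ≤ 2 * D := by
    intro t ht
    obtain ⟨ht0, htT⟩ := ht
    have hρlt : ρ < rfn t := hρrfn t ht0 htT
    have hrt0 : 0 < rfn t := hrfnpos t ht0
    -- finset identity
    have hfe : X.filter (fun y => t < φ y)
        = (X.filter (· ∈ ball x (rfn t))).filter (fun y => ¬ y ∈ ball x ρ) := by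
      rw [Finset.filter_filter]
      apply Finset.filter_congr
      intro y _
      rw [hiff t ht0 y, mem_ball, mem_ball, dist_comm]
    have hcards : ((X.filter (fun y => t < φ y)).card : ℝ)
        = ((X.filter (· ∈ ball x (rfn t))).card : ℝ)
          - ((X.filter (· ∈ ball x ρ)).card : ℝ) := by
      have hsplit := Finset.filter_union_filter_not_eq (fun y => y ∈ ball x ρ)
        (X.filter (· ∈ ball x (rfn t)))
      have hdisj := Finset.disjoint_filter_filter_not
        (X.filter (· ∈ ball x (rfn t))) (X.filter (· ∈ ball x (rfn t)))
        (fun y => y ∈ ball x ρ)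
      have hcard := Finset.card_union_of_disjoint hdisj
      rw [hsplit] at hcard
      have hsub : (X.filter (· ∈ ball x (rfn t))).filter (fun y => y ∈ ball x ρ)
          = X.filter (· ∈ ball x ρ) := by
        rw [Finset.filter_filter]
        apply Finset.filter_congr
        intro y _
        constructor
        · rintro ⟨-, h⟩; exact h
        · intro h; exact ⟨ball_subset_ball hρlt.le h, h⟩
      rw [hsub] at hcard
      rw [hfe]
      have : ((X.filter (· ∈ ball x (rfn t))).card : ℝ)
          = ((X.filter (· ∈ ball x ρ)).card : ℝ)
            + (((X.filter (· ∈ ball x (rfn t))).filter (fun y => ¬ y ∈ ball x ρ)).card : ℝ) := by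
        exact_mod_cast congrArg (Nat.cast (R := ℝ)) hcard
      linarith
    -- measure identity
    have hse : {y : M | t < φ y} = ball x (rfn t) \ ball x ρ := by
      ext y
      rw [Set.mem_setOf_eq, hiff t ht0 y, Set.mem_diff, mem_ball, mem_ball, dist_comm]
    have hmeq : (σ {y | t < φ y}).toReal
        = (σ (ball x (rfn t))).toReal - (σ (ball x ρ)).toReal := by
      rw [hse, measure_diff (ball_subset_ball hρlt.le) measurableSet_ball.nullMeasurableSet
        (measure_ne_top σ _),
        ENNReal.toReal_sub_of_le (measure_mono (ball_subset_ball hρlt.le)) (measure_ne_top σ _)]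
    rw [hcards, hmeq, sub_div]
    have hd1 := hdisc' x (rfn t) hrt0
    have hd2 := hdisc' x ρ hρ0
    calc |(((X.filter (· ∈ ball x (rfn t))).card : ℝ) / X.card
            - ((X.filter (· ∈ ball x ρ)).card : ℝ) / X.card)
          - ((σ (ball x (rfn t))).toReal - (σ (ball x ρ)).toReal)|
        = |(((X.filter (· ∈ ball x (rfn t))).card : ℝ) / X.card - (σ (ball x (rfn t))).toReal)
          - (((X.filter (· ∈ ball x ρ)).card : ℝ) / X.card - (σ (ball x ρ)).toReal)| := by
          ring_nf
      _ ≤ |((X.filter (· ∈ ball x (rfn t))).card : ℝ) / X.card - (σ (ball x (rfn t))).toReal|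
          + |((X.filter (· ∈ ball x ρ)).card : ℝ) / X.card - (σ (ball x ρ)).toReal| :=
          abs_sub _ _
      _ ≤ 2 * D := by linarith
  -- Step D : conclude
  have hmain : (1 / (X.card:ℝ)) * ∑ y ∈ X, φ y - ∫ y, φ y ∂σ
      = ∫ t in Set.Ioo (0:ℝ) T,
          (((X.filter (fun y => t < φ y)).card : ℝ) / X.card - (σ {y | t < φ y}).toReal) := by
    rw [hXrep, hσrep, ← integral_const_mul, ← integral_sub (hg1int.const_mul _) hg2int]
    apply setIntegral_congr_fun measurableSet_Ioo
    intro t _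
    simp only [div_eq_inv_mul, one_div]
    ring
  rw [hmain]
  have hnorm := norm_integral_le_of_norm_le_const (μ := volume.restrict (Set.Ioo (0:ℝ) T))
    (C := 2 * D)
    (f := fun t => (((X.filter (fun y => t < φ y)).card : ℝ) / X.card - (σ {y | t < φ y}).toReal))
    (by
      rw [ae_restrict_iff' measurableSet_Ioo]
      apply Filter.Eventually.of_forall
      intro t ht
      rw [Real.norm_eq_abs]
      exact hpt t ht)
  rw [Real.norm_eq_abs] at hnorm
  calc |∫ t in Set.Ioo (0:ℝ) T,
        (((X.filter (fun y => t < φ y)).card : ℝ) / X.card - (σ {y | t < φ y}).toReal)|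
      ≤ 2 * D * ((volume.restrict (Set.Ioo (0:ℝ) T)) Set.univ).toReal := hnorm
    _ = 2 * D * T := by
        rw [Measure.restrict_apply_univ, Real.volume_Ioo, sub_zero,
          ENNReal.toReal_ofReal hT0.le]
    _ = 2 * D * ρ ^ (-s) := by rw [hTdef]

theorem pointwise_potential_difference_bound
    {M : Type*} [MetricSpace M] [CompactSpace M] [ConnectedSpace M] [Nontrivial M]
    [MeasurableSpace M] [BorelSpace M]
    (d : ℕ) (hd : 1 ≤ d)
    (σ : Measure M) [IsProbabilityMeasure σ]
    -- Regularity hypothesis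
    (Cbot Ctop : ℝ) (hCbot : 0 < Cbot) (hCbotTop : Cbot ≤ Ctop)
    (hreg : ∀ (x : M) (r : ℝ), 0 < r → r ≤ diam (Set.univ : Set M) →
      Cbot * r ^ d ≤ (σ (ball x r)).toReal ∧ (σ (ball x r)).toReal ≤ Ctop * r ^ d)
    (s : ℝ) (hs0 : 0 < s) (hsd : s < d)
    (γ : ℝ) (hγ : 0 < γ) :
    ∃ C > (0 : ℝ), ∃ D0 : ℝ, 0 < D0 ∧ D0 < 1 ∧
      ∀ X : Finset M, X.Nonempty →
        (∀ x ∈ X, ∀ y ∈ X, x ≠ y → dist x y > γ * ((X.card : ℝ)) ^ (-(1 : ℝ) / d)) →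
        ∀ D : ℝ, 1 / (X.card : ℝ) < D → D ≤ D0 →
          γ * D ^ ((1 : ℝ) / d) < diam (Set.univ : Set M) →
          ballDisc σ X ≤ D →
          ∀ x ∈ X,
            |meanPotentialX s X x - ∫ y, dist x y ^ (-s) ∂σ| ≤
              C * D ^ (1 - s / (d : ℝ)) := by
  classical
  have hdpos : (0:ℝ) < d := by exact_mod_cast Nat.lt_of_lt_of_le Nat.zero_lt_one hd
  have hdne : ((d:ℝ)) ≠ 0 := ne_of_gt hdpos
  have hR : 0 < diam (Set.univ : Set M) := by
    obtain ⟨z, w, hzw⟩ := exists_pair_ne M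
    have h1 : dist z w ≤ diam (Set.univ : Set M) :=
      dist_le_diam_of_mem isCompact_univ.isBounded (Set.mem_univ z) (Set.mem_univ w)
    have h2 : 0 < dist z w := dist_pos.mpr hzw
    linarith
  set R := diam (Set.univ : Set M) with hRdef
  have hCtop : (0:ℝ) < Ctop := lt_of_lt_of_le hCbot hCbotTop
  set Ctop' : ℝ := Ctop + (R ^ d)⁻¹ with hCtop'def
  have hCtop'pos : 0 < Ctop' := by positivity
  have htop : ∀ (c : M) (r : ℝ), 0 < r → (σ (ball c r)).toReal ≤ Ctop' * r ^ d := by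
    intro c r hr
    rcases le_or_gt r R with h | h
    · have := (hreg c r hr h).2
      have h2 : (0:ℝ) ≤ (R ^ d)⁻¹ * r ^ d := by positivity
      rw [hCtop'def]
      nlinarith [pow_pos hr d]
    · have h1 : (σ (ball c r)).toReal ≤ 1 := by
        simpa using ENNReal.toReal_mono ENNReal.one_ne_top (prob_le_one (μ := σ) (s := ball c r))
      have h2 : R ^ d ≤ r ^ d := pow_le_pow_left₀ hR.le h.le d
      have h3 : (1:ℝ) ≤ (R ^ d)⁻¹ * r ^ d := by
        rw [inv_mul_eq_div, le_div_iff₀ (by positivity)]; linarith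
      rw [hCtop'def]
      nlinarith [pow_pos hr d, mul_pos hCtop (pow_pos hr d)]
  have hξ0 : (0:ℝ) < 2 ^ (s - (d:ℝ)) := Real.rpow_pos_of_pos (by norm_num) _
  have hξ1 : (2:ℝ) ^ (s - (d:ℝ)) < 1 :=
    Real.rpow_lt_one_of_one_lt_of_neg (by norm_num) (by linarith)
  set A : ℝ := Ctop' * 4 ^ d / (Cbot * γ ^ d) with hAdef
  have hApos : 0 < A := by positivity
  set B : ℝ := A * 2 ^ s / (1 - 2 ^ (s - (d:ℝ))) with hBdef
  have hBpos : 0 < B := div_pos (by positivity) (by linarith)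
  set B' : ℝ := Ctop' * 2 ^ s / (1 - 2 ^ (s - (d:ℝ))) with hB'def
  have hB'pos : 0 < B' := div_pos (by positivity) (by linarith)
  refine ⟨2 * γ ^ (-s) + (B + B') * γ ^ ((d:ℝ) - s), by positivity, 1/2, by norm_num,
    by norm_num, ?_⟩
  intro X hXne hsep D hND hDD0 hdiam hdisc x hx
  have hN0 : 0 < X.card := Finset.card_pos.mpr hXne
  have hNR : (0:ℝ) < X.card := by exact_mod_cast hN0
  have hD0 : 0 < D := lt_trans (by positivity) hND
  set η : ℝ := γ * (X.card:ℝ) ^ (-(1:ℝ)/d) with hηdef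
  set ρ : ℝ := γ * D ^ ((1:ℝ)/d) with hρdef
  have hη0 : 0 < η := by
    rw [hηdef]; positivity
  have hρ0 : 0 < ρ := by
    rw [hρdef]; positivity
  have hηρ : η < ρ := by
    rw [hηdef, hρdef]
    have h1 : (X.card:ℝ) ^ (-(1:ℝ)/d) = ((X.card:ℝ)⁻¹) ^ ((1:ℝ)/d) := by
      rw [Real.inv_rpow hNR.le, ← Real.rpow_neg hNR.le, neg_div]
    rw [h1]
    apply mul_lt_mul_of_pos_left _ hγ
    apply Real.rpow_lt_rpow (by positivity) (by rwa [one_div] at hND) (by positivity)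
  have hρR : ρ < R := hdiam
  -- pointwise discrepancy
  have hdisc' : ∀ (y : M) (r : ℝ), 0 < r →
      |((X.filter (· ∈ ball y r)).card : ℝ) / X.card - (σ (ball y r)).toReal| ≤ D := by
    intro y r hr
    set F : M → Set.Ioi (0:ℝ) → ℝ := fun y r =>
      |(((X : Set M) ∩ ball y (r : ℝ)).ncard : ℝ) / X.card - (σ (ball y (r : ℝ))).toReal|
      with hF
    have hbound : ∀ y r, F y r ≤ 1 := by
      intro y r
      have h1 : (((X : Set M) ∩ ball y (r:ℝ)).ncard : ℝ) / X.card ≤ 1 := by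
        rw [div_le_one hNR]
        have : ((X : Set M) ∩ ball y (r:ℝ)).ncard ≤ ((X : Set M)).ncard :=
          Set.ncard_le_ncard Set.inter_subset_left (X.finite_toSet)
        rw [Set.ncard_coe_finset] at this
        exact_mod_cast this
      have h2 : (σ (ball y (r:ℝ))).toReal ≤ 1 := by
        simpa using ENNReal.toReal_mono ENNReal.one_ne_top
          (prob_le_one (μ := σ) (s := ball y (r:ℝ)))
      have h3 : (0:ℝ) ≤ (((X : Set M) ∩ ball y (r:ℝ)).ncard : ℝ) / X.card := by positivity
      have h4 : (0:ℝ) ≤ (σ (ball y (r:ℝ))).toReal := ENNReal.toReal_nonneg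
      rw [abs_le]; constructor <;> linarith
    have hval : F y ⟨r, hr⟩ ≤ ballDisc σ X := by
      have hin : F y ⟨r, hr⟩ ≤ ⨆ r' : Set.Ioi (0:ℝ), F y r' :=
        le_ciSup (f := fun r' : Set.Ioi (0:ℝ) => F y r')
          ⟨1, by rintro v ⟨r', rfl⟩; exact hbound y r'⟩ ⟨r, hr⟩
      have hout : (⨆ r' : Set.Ioi (0:ℝ), F y r') ≤ ballDisc σ X := by
        apply le_ciSup (f := fun y => ⨆ r' : Set.Ioi (0:ℝ), F y r')
        refine ⟨1, by rintro v ⟨y', rfl⟩; exact ciSup_le (fun r' => hbound y' r')⟩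
      exact le_trans hin hout
    have hcard : (((X : Set M) ∩ ball y r).ncard : ℝ)
        = ((X.filter (· ∈ ball y r)).card : ℝ) := by
      have : ((X : Set M) ∩ ball y r) = ((X.filter (· ∈ ball y r) : Finset M) : Set M) := by
        ext z; simp [Finset.coe_filter]
      rw [this, Set.ncard_coe_finset]
    calc |((X.filter (· ∈ ball y r)).card : ℝ) / X.card - (σ (ball y r)).toReal|
        = F y ⟨r, hr⟩ := by rw [hF]; simp [hcard]
      _ ≤ ballDisc σ X := hval
      _ ≤ D := hdisc
  -- packing bound
  have hpack : ∀ u : ℝ, η / 2 ≤ u →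
      ((X.filter (· ∈ ball x u)).card : ℝ) ≤ A * X.card * u ^ d := by
    intro u hu
    have hu0 : 0 < u := lt_of_lt_of_le (by linarith) hu
    set Y := X.filter (· ∈ ball x u) with hY
    have hdisj : (Y : Set M).PairwiseDisjoint (fun y => ball y (η/2)) := by
      intro a ha b hb hab
      apply ball_disjoint_ball
      have haX : a ∈ X := (Finset.mem_filter.mp (Finset.mem_coe.mp ha)).1
      have hbX : b ∈ X := (Finset.mem_filter.mp (Finset.mem_coe.mp hb)).1
      have := hsep a haX b hbX hab
      linarith
    have hmeas : ∀ b ∈ Y, MeasurableSet (ball b (η/2)) := fun b _ => measurableSet_ball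
    have hunion : σ (⋃ b ∈ Y, ball b (η/2)) = ∑ b ∈ Y, σ (ball b (η/2)) :=
      measure_biUnion_finset hdisj hmeas
    have hsub : (⋃ b ∈ Y, ball b (η/2)) ⊆ ball x (u + η/2) := by
      intro z hz
      simp only [Set.mem_iUnion] at hz
      obtain ⟨b, hb, hzb⟩ := hz
      have hbball : b ∈ ball x u := (Finset.mem_filter.mp hb).2
      have h1 : dist z b < η/2 := mem_ball.mp hzb
      have h2 : dist b x < u := mem_ball.mp hbball
      have := dist_triangle z b x
      exact mem_ball.mpr (by linarith)
    have hfin : ∀ S : Set M, σ S ≠ ⊤ := fun S => measure_ne_top σ S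
    have hlhs : (Y.card : ℝ) * (Cbot * (η/2) ^ d) ≤ (σ (⋃ b ∈ Y, ball b (η/2))).toReal := by
      rw [hunion, ENNReal.toReal_sum (fun b _ => hfin _)]
      calc (Y.card : ℝ) * (Cbot * (η/2) ^ d) = ∑ _b ∈ Y, Cbot * (η/2) ^ d := by
            rw [Finset.sum_const, nsmul_eq_mul]
        _ ≤ ∑ b ∈ Y, (σ (ball b (η/2))).toReal :=
            Finset.sum_le_sum (fun b _ => (hreg b (η/2) (by linarith) (by linarith)).1)
    have hrhs : (σ (⋃ b ∈ Y, ball b (η/2))).toReal ≤ Ctop' * (2*u) ^ d := by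
      calc (σ (⋃ b ∈ Y, ball b (η/2))).toReal ≤ (σ (ball x (u + η/2))).toReal :=
            ENNReal.toReal_mono (hfin _) (measure_mono hsub)
        _ ≤ Ctop' * (u + η/2) ^ d := htop x _ (by linarith)
        _ ≤ Ctop' * (2*u) ^ d := by
            apply mul_le_mul_of_nonneg_left _ hCtop'pos.le
            apply pow_le_pow_left₀ (by linarith) (by linarith)
    have hkey : (Y.card : ℝ) * (Cbot * (η/2) ^ d) ≤ Ctop' * (2*u) ^ d := le_trans hlhs hrhs
    have h1 : (((X.card : ℝ)) ^ (-(1:ℝ)/d)) ^ d = ((X.card:ℝ))⁻¹ := by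
      rw [← Real.rpow_natCast (((X.card : ℝ)) ^ (-(1:ℝ)/d)) d, ← Real.rpow_mul hNR.le]
      rw [div_mul_cancel₀ _ hdne, Real.rpow_neg_one]
    have hηd : (η/2) ^ d = (γ/2) ^ d * ((X.card:ℝ))⁻¹ := by
      rw [hηdef]
      rw [show γ * (X.card:ℝ) ^ (-(1:ℝ)/d) / 2 = (γ/2) * ((X.card:ℝ) ^ (-(1:ℝ)/d)) by ring,
        mul_pow, h1]
    rw [hηd] at hkey
    have h2u : (2*u)^d = 2^d * u^d := mul_pow 2 u d
    have h4 : (4:ℝ)^d = 2^d * 2^d := by rw [← mul_pow]; norm_num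
    have hγd : ((γ:ℝ)/2)^d = γ^d / 2^d := div_pow γ 2 d
    rw [hγd] at hkey
    have h2d : (0:ℝ) < 2^d := by positivity
    have target : ((Y.card:ℝ)) * (Cbot * (γ^d / 2^d * ((X.card:ℝ))⁻¹)) ≤ Ctop' * (2^d * u^d) := by
      rw [← h2u]; exact hkey
    have expand : A * (X.card:ℝ) * u ^ d
        = (Ctop' * (2^d * u^d)) / (Cbot * (γ^d / 2^d * ((X.card:ℝ))⁻¹)) := by
      rw [hAdef, h4]; field_simp
    rw [expand, le_div_iff₀ (by positivity)]
    exact target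
  -- near-field sum bound
  have hsep' : ∀ y ∈ X, y ≠ x → dist x y > η := by
    intro y hy hyx
    exact hsep x hx y hy (Ne.symm hyx)
  have hnear := auxNearSum d hd s hs0 hsd A η hApos hη0 X x hsep' hpack
  obtain ⟨n, hn⟩ := pow_unbounded_of_one_lt (ρ/η) (by norm_num : (1:ℝ) < 2)
  have hρη2 : ρ ≤ η * 2 ^ n := by
    rw [div_lt_iff₀ hη0] at hn
    linarith
  have hgρ := hnear n ρ hρ0 hρη2
  rw [← hBdef] at hgρ
  -- σ-side bounds
  have hσaux := auxSigma σ d hd s hs0 hsd Ctop' hCtop'pos x htop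
  have hσball := hσaux.1
  have hInt := hσaux.2
  -- far-field bound
  have hfar := auxFar σ s hs0 X hXne x D ρ hρ0 hD0 hdisc'
  -- notation
  set f : M → ℝ := fun y => dist x y ^ (-s) with hfdef
  set φ : M → ℝ := fun y => if ρ ≤ dist x y then f y else 0 with hφdef
  set fnear : M → ℝ := fun y => if dist x y < ρ then f y else 0 with hfneardef
  have hf0 : ∀ y, 0 ≤ f y := fun y => Real.rpow_nonneg dist_nonneg _
  -- split the finite sum
  have hmp : meanPotentialX s X x
      = (1 / (X.card:ℝ)) * (∑ y ∈ X.filter (fun y => 0 < dist x y ∧ dist x y < ρ), f y)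
        + (1 / (X.card:ℝ)) * (∑ y ∈ X, φ y) := by
    have hmp0 : meanPotentialX s X x = (1/(X.card:ℝ)) * ∑ y ∈ X.erase x, f y := rfl
    have hsplit := Finset.sum_filter_add_sum_filter_not (X.erase x)
      (fun y => dist x y < ρ) f
    have he1 : (X.erase x).filter (fun y => dist x y < ρ)
        = X.filter (fun y => 0 < dist x y ∧ dist x y < ρ) := by
      ext y
      simp only [Finset.mem_filter, Finset.mem_erase]
      constructor
      · rintro ⟨⟨hyx, hyX⟩, h⟩
        exact ⟨hyX, dist_pos.mpr (Ne.symm hyx), h⟩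
      · rintro ⟨hyX, h0, h⟩
        exact ⟨⟨Ne.symm (dist_pos.mp h0), hyX⟩, h⟩
    have he2 : (X.erase x).filter (fun y => ¬ dist x y < ρ)
        = X.filter (fun y => ρ ≤ dist x y) := by
      ext y
      simp only [Finset.mem_filter, Finset.mem_erase, not_lt]
      constructor
      · rintro ⟨⟨hyx, hyX⟩, h⟩; exact ⟨hyX, h⟩
      · rintro ⟨hyX, h⟩
        refine ⟨⟨?_, hyX⟩, h⟩
        have h0 : 0 < dist x y := lt_of_lt_of_le hρ0 h
        exact Ne.symm (dist_pos.mp h0)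
    have he3 : ∑ y ∈ X.filter (fun y => ρ ≤ dist x y), f y = ∑ y ∈ X, φ y := by
      rw [hφdef, Finset.sum_filter]
    rw [hmp0, ← hsplit, he1, he2, he3, mul_add]
  -- split the integral
  have hIntNear : Integrable fnear σ := by
    have h1 : fnear = ({y : M | dist x y < ρ}).indicator f := by
      funext y
      by_cases h : dist x y < ρ <;> simp [hfneardef, Set.indicator, h]
    rw [h1]
    exact hInt.indicator (measurableSet_lt (Continuous.dist continuous_const
      continuous_id).measurable measurable_const)
  have hIntφ : Integrable φ σ := by
    have h1 : φ = ({y : M | ρ ≤ dist x y}).indicator f := by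
      funext y
      by_cases h : ρ ≤ dist x y <;> simp [hφdef, Set.indicator, h]
    rw [h1]
    exact hInt.indicator (measurableSet_le measurable_const (Continuous.dist continuous_const
      continuous_id).measurable)
  have hU : ∫ y, f y ∂σ = ∫ y, fnear y ∂σ + ∫ y, φ y ∂σ := by
    rw [← integral_add hIntNear hIntφ]
    apply integral_congr_ae
    apply Filter.Eventually.of_forall
    intro y
    by_cases h : dist x y < ρ
    · simp [hfneardef, hφdef, h, not_le.mpr h]
    · simp [hfneardef, hφdef, h, not_lt.mp h]
  -- near σ-part bound
  have hAσ : ∫ y, fnear y ∂σ ≤ B' * ρ ^ ((d:ℝ) - s) := by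
    have hnn : 0 ≤ᵐ[σ] fnear := by
      apply Filter.Eventually.of_forall
      intro y
      by_cases h : dist x y < ρ <;> simp [hfneardef, h, hf0 y]
    rw [integral_eq_lintegral_of_nonneg_ae hnn hIntNear.aestronglyMeasurable]
    have he : ∀ y, ENNReal.ofReal (fnear y)
        = (ball x ρ).indicator (fun y => ENNReal.ofReal (f y)) y := by
      intro y
      by_cases h : dist x y < ρ
      · have hmem : y ∈ ball x ρ := mem_ball.mpr (by rwa [dist_comm])
        simp [hfneardef, h, Set.indicator, hmem]
      · have hmem : y ∉ ball x ρ := by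
          rw [mem_ball, dist_comm]; exact h
        simp [hfneardef, h, Set.indicator, hmem]
    have h2 : ∫⁻ y, ENNReal.ofReal (fnear y) ∂σ ≤ ENNReal.ofReal (B' * ρ ^ ((d:ℝ) - s)) := by
      calc ∫⁻ y, ENNReal.ofReal (fnear y) ∂σ
          = ∫⁻ y, (ball x ρ).indicator (fun y => ENNReal.ofReal (f y)) y ∂σ :=
            lintegral_congr he
        _ = ∫⁻ y in ball x ρ, ENNReal.ofReal (f y) ∂σ :=
            lintegral_indicator measurableSet_ball _
        _ ≤ ENNReal.ofReal (B' * ρ ^ ((d:ℝ) - s)) := by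
            have := hσball ρ hρ0
            rw [← hB'def] at this
            exact this
    exact ENNReal.toReal_le_of_le_ofReal (by positivity) h2
  have hAσ0 : 0 ≤ ∫ y, fnear y ∂σ := by
    apply integral_nonneg
    intro y
    by_cases h : dist x y < ρ <;> simp [hfneardef, h, hf0 y]
  -- near X-part bound
  have hgρ' : (1 / (X.card:ℝ)) * (∑ y ∈ X.filter (fun y => 0 < dist x y ∧ dist x y < ρ), f y)
      ≤ B * ρ ^ ((d:ℝ) - s) := by
    rw [one_div, inv_mul_le_iff₀ hNR]
    calc (∑ y ∈ X.filter (fun y => 0 < dist x y ∧ dist x y < ρ), f y)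
        ≤ B * X.card * ρ ^ ((d:ℝ) - s) := hgρ
      _ = X.card * (B * ρ ^ ((d:ℝ) - s)) := by ring
  have hg0 : 0 ≤ (1 / (X.card:ℝ)) * (∑ y ∈ X.filter (fun y => 0 < dist x y ∧ dist x y < ρ), f y) := by
    apply mul_nonneg (by positivity)
    exact Finset.sum_nonneg (fun y _ => hf0 y)
  -- assemble
  have hmain : |meanPotentialX s X x - ∫ y, f y ∂σ|
      ≤ 2 * D * ρ ^ (-s) + (B * ρ ^ ((d:ℝ) - s) + B' * ρ ^ ((d:ℝ) - s)) := by
    rw [hmp, hU]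
    have hstep : (1 / (X.card:ℝ)) * (∑ y ∈ X.filter (fun y => 0 < dist x y ∧ dist x y < ρ), f y)
        + (1 / (X.card:ℝ)) * (∑ y ∈ X, φ y) - (∫ y, fnear y ∂σ + ∫ y, φ y ∂σ)
        = ((1 / (X.card:ℝ)) * (∑ y ∈ X, φ y) - ∫ y, φ y ∂σ)
          + ((1 / (X.card:ℝ)) * (∑ y ∈ X.filter (fun y => 0 < dist x y ∧ dist x y < ρ), f y)
            - ∫ y, fnear y ∂σ) := by ring
    rw [hstep]
    calc |((1 / (X.card:ℝ)) * (∑ y ∈ X, φ y) - ∫ y, φ y ∂σ)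
          + ((1 / (X.card:ℝ)) * (∑ y ∈ X.filter (fun y => 0 < dist x y ∧ dist x y < ρ), f y)
            - ∫ y, fnear y ∂σ)|
        ≤ |(1 / (X.card:ℝ)) * (∑ y ∈ X, φ y) - ∫ y, φ y ∂σ|
          + |(1 / (X.card:ℝ)) * (∑ y ∈ X.filter (fun y => 0 < dist x y ∧ dist x y < ρ), f y)
            - ∫ y, fnear y ∂σ| := abs_add_le _ _
      _ ≤ 2 * D * ρ ^ (-s) + (B * ρ ^ ((d:ℝ) - s) + B' * ρ ^ ((d:ℝ) - s)) := by
          apply add_le_add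
          · exact hfar
          · rw [abs_le]
            constructor <;> linarith
  -- convert ρ-powers to D-powers
  have hconv1 : ρ ^ (-s) = γ ^ (-s) * D ^ (-(s/(d:ℝ))) := by
    rw [hρdef, Real.mul_rpow hγ.le (Real.rpow_nonneg hD0.le _), ← Real.rpow_mul hD0.le]
    congr 2
    field_simp
  have hconv2 : ρ ^ ((d:ℝ) - s) = γ ^ ((d:ℝ) - s) * D ^ (1 - s/(d:ℝ)) := by
    rw [hρdef, Real.mul_rpow hγ.le (Real.rpow_nonneg hD0.le _), ← Real.rpow_mul hD0.le]
    congr 2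
    field_simp
  have hDcomb : D * D ^ (-(s/(d:ℝ))) = D ^ (1 - s/(d:ℝ)) := by
    nth_rewrite 1 [show D = D ^ (1:ℝ) from (Real.rpow_one D).symm]
    rw [← Real.rpow_add hD0]
    congr 1
  calc |meanPotentialX s X x - ∫ y, f y ∂σ|
      ≤ 2 * D * ρ ^ (-s) + (B * ρ ^ ((d:ℝ) - s) + B' * ρ ^ ((d:ℝ) - s)) := hmain
    _ = (2 * γ ^ (-s) + (B + B') * γ ^ ((d:ℝ) - s)) * D ^ (1 - s/(d:ℝ)) := by
        rw [hconv1, hconv2]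
        rw [show 2 * D * (γ ^ (-s) * D ^ (-(s/(d:ℝ))))
          = 2 * γ ^ (-s) * (D * D ^ (-(s/(d:ℝ)))) by ring, hDcomb]
        ring
end

section
/- Assume the Regularity hypothesis. Fix a real number s with 0 < s < d and a constant γ > 0. Then there exist constants C > 0 and D0 ∈ (0, 1), depending only on d, s, γ, C_bot, C_top and diam(M), with the following property: for every nonempty finite subset X ⊆ M with N := |X| whose distinct points satisfy dist(x, y) > γ N^{−1/d}, and for every D with 1/N < D ≤ D0, γ D^{1/d} < diam(M) and D(X) ≤ D, one has |E_X − (1/N) Σ_{x ∈ X} U(x)| ≤ C · D^{1−s/d}. -/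
open MeasureTheory Metric Filter

/-- Normalized Riesz `s`-energy of a finite point set. -/
noncomputable def rieszEnergy {M : Type*} [MetricSpace M] (s : ℝ) (X : Finset M) : ℝ :=
  letI := Classical.decEq M
  (1 / (X.card : ℝ) ^ 2) * ∑ x ∈ X, ∑ y ∈ X.erase x, dist x y ^ (-s)

section Aux

open Set
open scoped ENNReal

lemma integral_phi_Ioi {s a : ℝ} (hs : 0 < s) (ha : 0 < a) :
    ∫ r in Ioi a, s * r ^ (-s - 1) = a ^ (-s) := by
  rw [integral_const_mul, integral_Ioi_rpow_of_lt (by linarith) ha]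
  have h : -s - 1 + 1 = -s := by ring
  rw [h]; field_simp

lemma integrableOn_phi_Ioi {s a : ℝ} (hs : 0 < s) (ha : 0 < a) :
    IntegrableOn (fun r => s * r ^ (-s - 1)) (Ioi a) :=
  (integrableOn_Ioi_rpow_of_lt (by linarith) ha).const_mul s

lemma measurable_phi_min {s d a K : ℝ} :
    Measurable (fun r : ℝ => s * r ^ (-s - 1) * min a (K * r ^ d)) := by
  fun_prop

lemma integral_min_bound {s d : ℝ} (hs : 0 < s) (hsd : s < d) {a K R : ℝ}
    (haa : 0 ≤ a) (hK : 0 ≤ K) (hR : 0 < R) :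
    IntegrableOn (fun r => s * r ^ (-s - 1) * min a (K * r ^ d)) (Ioi 0) ∧
    ∫ r in Ioi 0, s * r ^ (-s - 1) * min a (K * r ^ d) ≤
      K * (s / (d - s)) * R ^ (d - s) + a * R ^ (-s) := by
  set f := fun r : ℝ => s * r ^ (-s - 1) * min a (K * r ^ d) with hf
  have hfm : Measurable f := measurable_phi_min
  have hgm1 : IntegrableOn (fun r : ℝ => K * s * r ^ (d - s - 1)) (Ioc 0 R) := by
    have : IntegrableOn (fun r : ℝ => r ^ (d - s - 1)) (Ioc 0 R) := by
      rw [← intervalIntegrable_iff_integrableOn_Ioc_of_le hR.le]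
      exact intervalIntegral.intervalIntegrable_rpow' (by linarith)
    exact this.const_mul (K * s)
  have hfle1 : ∀ r ∈ Ioc (0:ℝ) R, f r ≤ K * s * r ^ (d - s - 1) := by
    intro r hr
    have hr0 : (0:ℝ) < r := hr.1
    have : f r ≤ s * r ^ (-s - 1) * (K * r ^ d) := by
      apply mul_le_mul_of_nonneg_left (min_le_right _ _)
      positivity
    refine this.trans_eq ?_
    have : r ^ (-s - 1) * r ^ d = r ^ (d - s - 1) := by
      rw [← Real.rpow_add hr0]; ring_nf
    calc s * r ^ (-s - 1) * (K * r ^ d) = K * s * (r ^ (-s - 1) * r ^ d) := by ring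
      _ = K * s * r ^ (d - s - 1) := by rw [this]
  have hfnn : ∀ r ∈ Ioi (0:ℝ), 0 ≤ f r := by
    intro r hr
    have hr0 : (0:ℝ) < r := hr
    have h1 : (0:ℝ) ≤ min a (K * r ^ d) := le_min haa (by positivity)
    positivity
  have hint1 : IntegrableOn f (Ioc 0 R) := by
    refine hgm1.mono' hfm.aestronglyMeasurable.restrict ?_
    refine (ae_restrict_iff' measurableSet_Ioc).2 (Eventually.of_forall fun r hr => ?_)
    rw [Real.norm_eq_abs, abs_of_nonneg (hfnn r hr.1)]
    exact hfle1 r hr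
  have hgm2 : IntegrableOn (fun r : ℝ => a * (s * r ^ (-s - 1))) (Ioi R) :=
    (integrableOn_phi_Ioi hs hR).const_mul a
  have hfle2 : ∀ r ∈ Ioi R, f r ≤ a * (s * r ^ (-s - 1)) := by
    intro r hr
    have hr0 : (0:ℝ) < r := hR.trans hr
    have := min_le_left a (K * r ^ d)
    calc f r ≤ s * r ^ (-s - 1) * a := by
              apply mul_le_mul_of_nonneg_left this; positivity
      _ = a * (s * r ^ (-s - 1)) := by ring
  have hint2 : IntegrableOn f (Ioi R) := by
    refine hgm2.mono' hfm.aestronglyMeasurable.restrict ?_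
    refine (ae_restrict_iff' measurableSet_Ioi).2 (Eventually.of_forall fun r hr => ?_)
    rw [Real.norm_eq_abs, abs_of_nonneg (hfnn r (hR.trans hr))]
    exact hfle2 r hr
  have hunion : Ioc (0:ℝ) R ∪ Ioi R = Ioi 0 := Ioc_union_Ioi_eq_Ioi hR.le
  have hint : IntegrableOn f (Ioi 0) := by
    rw [← hunion]; exact hint1.union hint2
  refine ⟨hint, ?_⟩
  have hsplit : ∫ r in Ioi 0, f r = (∫ r in Ioc 0 R, f r) + ∫ r in Ioi R, f r := by
    rw [← hunion, setIntegral_union (Ioc_disjoint_Ioi le_rfl) measurableSet_Ioi hint1 hint2]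
  rw [hsplit]
  have h1 : ∫ r in Ioc 0 R, f r ≤ K * (s / (d - s)) * R ^ (d - s) := by
    have := setIntegral_mono_on hint1 hgm1 measurableSet_Ioc hfle1
    refine this.trans ?_
    rw [integral_const_mul, ← intervalIntegral.integral_of_le hR.le,
      integral_rpow (Or.inl (by linarith))]
    have h2 : d - s - 1 + 1 = d - s := by ring
    rw [h2, Real.zero_rpow (by linarith)]
    rw [div_eq_mul_inv, div_eq_mul_inv]
    ring_nf
    rfl
  have h2 : ∫ r in Ioi R, f r ≤ a * R ^ (-s) := by
    have := setIntegral_mono_on hint2 hgm2 measurableSet_Ioi hfle2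
    refine this.trans ?_
    rw [integral_const_mul, integral_phi_Ioi hs hR]
  linarith

lemma pot_eq {M : Type*} [MetricSpace M] [MeasurableSpace M] [BorelSpace M]
    (σ : Measure M) [IsProbabilityMeasure σ] {s : ℝ} (hs : 0 < s) (x : M)
    (hx : σ {x} = 0) :
    ∫ y, dist x y ^ (-s) ∂σ =
      ∫ r in Ioi 0, s * r ^ (-s - 1) * (σ (ball x r)).toReal := by
  have hφm : Measurable fun r : ℝ => s * r ^ (-s - 1) := by fun_prop
  have hφnn : ∀ r : ℝ, 0 < r → 0 ≤ s * r ^ (-s - 1) := fun r hr => by positivity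
  set c : ℝ → ℝ≥0∞ := fun r => ENNReal.ofReal (s * r ^ (-s - 1)) with hc
  have hcm : Measurable c := hφm.ennreal_ofReal
  set S : Set (ℝ × M) := {p | dist x p.2 < p.1} with hS
  have hSopen : IsOpen S :=
    isOpen_lt (continuous_const.dist continuous_snd) continuous_fst
  set g : ℝ → M → ℝ≥0∞ := fun r y => S.indicator (fun p => c p.1) (r, y) with hg
  have hgm : Measurable (Function.uncurry g) := by
    have : Function.uncurry g = S.indicator (fun p => c p.1) := rfl
    rw [this]
    exact (hcm.comp measurable_fst).indicator hSopen.measurableSet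
  have hswap :
      ∫⁻ r in Ioi 0, ∫⁻ y, g r y ∂σ =
        ∫⁻ y, (∫⁻ r in Ioi 0, g r y) ∂σ :=
    lintegral_lintegral_swap hgm.aemeasurable
  have hinner1 : ∀ r : ℝ, ∫⁻ y, g r y ∂σ = c r * σ (ball x r) := by
    intro r
    have : ∀ y, g r y = (ball x r).indicator (fun _ => c r) y := by
      intro y
      simp only [hg]
      by_cases h : dist x y < r
      · rw [indicator_of_mem (by exact h : (r, y) ∈ S),
          indicator_of_mem (by rw [mem_ball, dist_comm]; exact h)]
      · rw [indicator_of_notMem (by exact h : (r, y) ∉ S),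
          indicator_of_notMem (by rw [mem_ball, dist_comm]; exact h)]
    simp_rw [this]
    rw [lintegral_indicator_const measurableSet_ball]
  have hinner2 : ∀ y : M, 0 < dist x y →
      (∫⁻ r in Ioi 0, g r y) = ENNReal.ofReal (dist x y ^ (-s)) := by
    intro y hy
    have h1 : ∀ r : ℝ, g r y = (Ioi (dist x y)).indicator c r := by
      intro r
      simp only [hg]
      by_cases h : dist x y < r
      · rw [indicator_of_mem (by exact h : (r, y) ∈ S)]
        simp [Set.indicator_apply, mem_Ioi, h]
      · rw [indicator_of_notMem (by exact h : (r, y) ∉ S)]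
        simp [Set.indicator_apply, mem_Ioi, h]
    simp_rw [h1]
    rw [lintegral_indicator measurableSet_Ioi, Measure.restrict_restrict measurableSet_Ioi,
      inter_eq_self_of_subset_left (Ioi_subset_Ioi hy.le)]
    rw [← ofReal_integral_eq_lintegral_ofReal (integrableOn_phi_Ioi hs hy)
      ((ae_restrict_iff' measurableSet_Ioi).2 (Eventually.of_forall fun r hr => hφnn r (hy.trans hr)))]
    rw [integral_phi_Ioi hs hy]
  have hae : ∀ᵐ y ∂σ, 0 < dist x y := by
    have hsub : {y : M | ¬ 0 < dist x y} ⊆ {x} := by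
      intro y hy
      simp only [mem_setOf_eq, not_lt] at hy
      have : dist x y = 0 := le_antisymm hy dist_nonneg
      simp [eq_comm, dist_eq_zero.mp this]
    exact measure_mono_null hsub hx
  have hL : ∫⁻ y, ENNReal.ofReal (dist x y ^ (-s)) ∂σ
      = ∫⁻ r in Ioi 0, c r * σ (ball x r) := by
    rw [← lintegral_congr_ae (hae.mono fun y hy => hinner2 y hy), ← hswap]
    exact lintegral_congr fun r => hinner1 r
  have hdm : Measurable fun y => dist x y ^ (-s) := by fun_prop
  rw [integral_eq_lintegral_of_nonneg_ae
    (Eventually.of_forall fun y => Real.rpow_nonneg dist_nonneg _)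
    hdm.aestronglyMeasurable, hL]
  have hσm : Measurable fun r : ℝ => (σ (ball x r)).toReal := by
    have hmono : Monotone fun r : ℝ => σ (ball x r) :=
      fun a b hab => measure_mono (ball_subset_ball hab)
    exact hmono.measurable.ennreal_toReal
  rw [integral_eq_lintegral_of_nonneg_ae
    ((ae_restrict_iff' measurableSet_Ioi).2 (Eventually.of_forall fun r hr =>
      mul_nonneg (hφnn r hr) ENNReal.toReal_nonneg))
    (hφm.mul hσm).aestronglyMeasurable]
  congr 1
  refine lintegral_congr_ae ((ae_restrict_iff' measurableSet_Ioi).2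
    (Eventually.of_forall fun r hr => ?_))
  simp only [ENNReal.ofReal_mul (hφnn r hr), ENNReal.ofReal_toReal (measure_ne_top σ _), hc]

lemma sum_eq {M : Type*} [MetricSpace M] {s : ℝ} (hs : 0 < s) (x : M)
    (T : Finset M) (hT : ∀ y ∈ T, 0 < dist x y) :
    letI := Classical.dec
    IntegrableOn
      (fun r => s * r ^ (-s - 1) * ((T.filter (fun y => dist x y < r)).card : ℝ)) (Ioi 0) ∧
    ∑ y ∈ T, dist x y ^ (-s)
      = ∫ r in Ioi 0,
          s * r ^ (-s - 1) * ((T.filter (fun y => dist x y < r)).card : ℝ) := by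
  classical
  set φ : ℝ → ℝ := fun u => s * u ^ (-s - 1) with hφ
  set h : M → ℝ → ℝ := fun y => (Ioi (dist x y)).indicator φ with hh
  have hInt : ∀ y ∈ T, Integrable (h y) (volume.restrict (Ioi (0:ℝ))) := by
    intro y hy
    exact ((integrableOn_phi_Ioi hs (hT y hy)).integrable_indicator measurableSet_Ioi).restrict
  have hval : ∀ y ∈ T, ∫ r in Ioi (0:ℝ), h y r = dist x y ^ (-s) := by
    intro y hy
    simp only [hh]
    rw [integral_indicator measurableSet_Ioi, Measure.restrict_restrict measurableSet_Ioi,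
      inter_eq_self_of_subset_left (Ioi_subset_Ioi (hT y hy).le)]
    exact integral_phi_Ioi hs (hT y hy)
  have key : ∀ r ∈ Ioi (0:ℝ), (∑ y ∈ T, h y r)
      = φ r * ((T.filter (fun y => dist x y < r)).card : ℝ) := by
    intro r _
    have h1 : ∀ y, h y r = if dist x y < r then φ r else 0 := by
      intro y; simp [hh, Set.indicator_apply, mem_Ioi]
    simp_rw [h1]
    rw [← Finset.sum_filter, Finset.sum_const, nsmul_eq_mul, mul_comm]
  have hsum := integral_finset_sum T hInt
  have hIntSum : Integrable (fun r => ∑ y ∈ T, h y r) (volume.restrict (Ioi (0:ℝ))) :=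
    integrable_finset_sum T hInt
  have hcongr : IntegrableOn
      (fun r => φ r * ((T.filter (fun y => dist x y < r)).card : ℝ)) (Ioi 0) := by
    refine hIntSum.congr ((ae_restrict_iff' measurableSet_Ioi).2
      (Eventually.of_forall fun r hr => ?_))
    exact key r hr
  refine ⟨hcongr, ?_⟩
  have : ∫ r in Ioi (0:ℝ), (∑ y ∈ T, h y r)
      = ∫ r in Ioi (0:ℝ), φ r * ((T.filter (fun y => dist x y < r)).card : ℝ) :=
    setIntegral_congr_fun measurableSet_Ioi key
  rw [← this, hsum, Finset.sum_congr rfl hval]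

lemma packing {M : Type*} [MetricSpace M] [MeasurableSpace M] [BorelSpace M]
    (σ : Measure M) [IsProbabilityMeasure σ] (d : ℕ) {Cbot Ctop'' : ℝ}
    (hlow : ∀ (y : M) (ρ : ℝ), 0 < ρ → ρ ≤ diam (Set.univ : Set M) →
      Cbot * ρ ^ d ≤ (σ (ball y ρ)).toReal)
    (hup : ∀ (y : M) (ρ : ℝ), 0 < ρ → (σ (ball y ρ)).toReal ≤ Ctop'' * ρ ^ d)
    {T : Finset M} {δ : ℝ} (hδ : 0 < δ) (hδd : δ ≤ diam (Set.univ : Set M))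
    (hsep : ∀ y ∈ T, ∀ z ∈ T, y ≠ z → δ < dist y z)
    {x : M} {r : ℝ} (hr : 0 < r) (hTr : ∀ y ∈ T, y ∈ ball x r) :
    (T.card : ℝ) * (Cbot * (δ / 2) ^ d) ≤ Ctop'' * (r + δ / 2) ^ d := by
  have hdisj : (T : Set M).PairwiseDisjoint (fun y => ball y (δ / 2)) := by
    intro y hy z hz hyz
    exact ball_disjoint_ball (by linarith [hsep y hy z hz hyz])
  have hmeas := measure_biUnion_finset (μ := σ) hdisj (fun y _ => measurableSet_ball)
  have hsub : (⋃ y ∈ T, ball y (δ / 2)) ⊆ ball x (r + δ / 2) := by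
    intro z hz
    simp only [mem_iUnion] at hz
    obtain ⟨y, hy, hzy⟩ := hz
    have h1 : dist y x < r := hTr y hy
    have h2 : dist z y < δ / 2 := hzy
    calc dist z x ≤ dist z y + dist y x := dist_triangle _ _ _
      _ < r + δ / 2 := by linarith
  have hle : ∑ y ∈ T, σ (ball y (δ / 2)) ≤ σ (ball x (r + δ / 2)) := by
    rw [← hmeas]; exact measure_mono hsub
  have hleR : ∑ y ∈ T, (σ (ball y (δ / 2))).toReal ≤ (σ (ball x (r + δ / 2))).toReal := by
    rw [← ENNReal.toReal_sum (fun y _ => (measure_lt_top σ _).ne)]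
    exact ENNReal.toReal_mono (measure_lt_top σ _).ne hle
  have hlow' : ∀ y ∈ T, Cbot * (δ / 2) ^ d ≤ (σ (ball y (δ / 2))).toReal :=
    fun y _ => hlow y (δ / 2) (by linarith) (by linarith)
  calc (T.card : ℝ) * (Cbot * (δ / 2) ^ d)
      = ∑ _y ∈ T, Cbot * (δ / 2) ^ d := by rw [Finset.sum_const, nsmul_eq_mul]
    _ ≤ ∑ y ∈ T, (σ (ball y (δ / 2))).toReal := Finset.sum_le_sum hlow'
    _ ≤ (σ (ball x (r + δ / 2))).toReal := hleR
    _ ≤ Ctop'' * (r + δ / 2) ^ d := hup x _ (by linarith)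

lemma ballDisc_le {M : Type*} [MetricSpace M] [MeasurableSpace M]
    (σ : Measure M) [IsProbabilityMeasure σ] (X : Finset M) (hX : X.Nonempty)
    (y : M) {r : ℝ} (hr : 0 < r) :
    |(((X : Set M) ∩ ball y r).ncard : ℝ) / X.card - (σ (ball y r)).toReal|
      ≤ ballDisc σ X := by
  have hN : (0:ℝ) < X.card := by exact_mod_cast Finset.card_pos.2 hX
  have hbound : ∀ (z : M) (ρ : ℝ),
      |(((X : Set M) ∩ ball z ρ).ncard : ℝ) / X.card - (σ (ball z ρ)).toReal| ≤ 1 := by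
    intro z ρ
    have h1 : (((X : Set M) ∩ ball z ρ).ncard : ℝ) ≤ (X.card : ℝ) := by
      have h := Set.ncard_le_ncard (Set.inter_subset_left (s := (X : Set M)) (t := ball z ρ))
        (X.finite_toSet)
      rw [Set.ncard_coe_finset] at h
      exact_mod_cast h
    have h2 : (0:ℝ) ≤ (((X : Set M) ∩ ball z ρ).ncard : ℝ) := Nat.cast_nonneg _
    have h3 : (σ (ball z ρ)).toReal ≤ 1 := by
      have h := ENNReal.toReal_mono (ENNReal.one_ne_top) (prob_le_one (μ := σ) (s := ball z ρ))
      simpa using h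
    have h4 : (0:ℝ) ≤ (σ (ball z ρ)).toReal := ENNReal.toReal_nonneg
    have h5 : (((X : Set M) ∩ ball z ρ).ncard : ℝ) / X.card ≤ 1 := by
      rw [div_le_one hN]; exact h1
    have h6 : (0:ℝ) ≤ (((X : Set M) ∩ ball z ρ).ncard : ℝ) / X.card := by positivity
    rw [abs_le]; constructor <;> linarith
  set F : M → Set.Ioi (0:ℝ) → ℝ := fun z ρ =>
    |(((X : Set M) ∩ ball z (ρ : ℝ)).ncard : ℝ) / X.card - (σ (ball z (ρ : ℝ))).toReal| with hF
  have hinner : ∀ z : M, F z ⟨r, hr⟩ ≤ ⨆ ρ : Set.Ioi (0:ℝ), F z ρ := by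
    intro z
    refine le_ciSup ⟨1, ?_⟩ (⟨r, hr⟩ : Set.Ioi (0:ℝ))
    rintro v ⟨ρ, rfl⟩
    exact hbound z ρ
  have houter : (⨆ ρ : Set.Ioi (0:ℝ), F y ρ) ≤ ⨆ z : M, ⨆ ρ : Set.Ioi (0:ℝ), F z ρ := by
    refine le_ciSup (f := fun z : M => ⨆ ρ : Set.Ioi (0:ℝ), F z ρ) ⟨1, ?_⟩ y
    rintro v ⟨z, rfl⟩
    exact ciSup_le fun ρ => hbound z ρ
  exact (hinner y).trans houter

end Aux

open Set
open scoped ENNReal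

set_option maxHeartbeats 1000000 in
theorem energy_vs_mean_potential_bound
    {M : Type*} [MetricSpace M] [CompactSpace M] [ConnectedSpace M] [Nontrivial M]
    [MeasurableSpace M] [BorelSpace M]
    (d : ℕ) (hd : 1 ≤ d)
    (σ : Measure M) [IsProbabilityMeasure σ]
    -- Regularity hypothesis
    (Cbot Ctop : ℝ) (hCbot : 0 < Cbot) (hCbotTop : Cbot ≤ Ctop)
    (hreg : ∀ (x : M) (r : ℝ), 0 < r → r ≤ diam (Set.univ : Set M) →
      Cbot * r ^ d ≤ (σ (ball x r)).toReal ∧ (σ (ball x r)).toReal ≤ Ctop * r ^ d)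
    (s : ℝ) (hs0 : 0 < s) (hsd : s < d)
    (γ : ℝ) (hγ : 0 < γ) :
    ∃ C > (0 : ℝ), ∃ D0 : ℝ, 0 < D0 ∧ D0 < 1 ∧
      ∀ X : Finset M, X.Nonempty →
        (∀ x ∈ X, ∀ y ∈ X, x ≠ y → dist x y > γ * ((X.card : ℝ)) ^ (-(1 : ℝ) / d)) →
        ∀ D : ℝ, 1 / (X.card : ℝ) < D → D ≤ D0 →
          γ * D ^ ((1 : ℝ) / d) < diam (Set.univ : Set M) →
          ballDisc σ X ≤ D →
          |rieszEnergy s X -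
              (1 / (X.card : ℝ)) * ∑ x ∈ X, ∫ y, dist x y ^ (-s) ∂σ| ≤
            C * D ^ (1 - s / (d : ℝ)) := by
  classical
  have hdR0 : (0:ℝ) < (d:ℝ) := by exact_mod_cast Nat.lt_of_lt_of_le Nat.zero_lt_one hd
  have hdsR : s < (d:ℝ) := hsd
  have hds : (0:ℝ) < (d:ℝ) - s := by linarith
  set dM := diam (Set.univ : Set M) with hdMdef
  have hdM0 : 0 < dM := by
    obtain ⟨a, b, hab⟩ := exists_pair_ne M
    have h1 : 0 < dist a b := dist_pos.2 hab
    have h2 : dist a b ≤ dM := dist_le_diam_of_mem isCompact_univ.isBounded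
      (mem_univ a) (mem_univ b)
    linarith
  have hCtop : 0 < Ctop := lt_of_lt_of_le hCbot hCbotTop
  set Ct2 : ℝ := max Ctop (dM ^ d)⁻¹ with hCt2def
  have hCt2 : 0 < Ct2 := lt_of_lt_of_le hCtop (le_max_left _ _)
  have hup : ∀ (y : M) (ρ : ℝ), 0 < ρ → (σ (ball y ρ)).toReal ≤ Ct2 * ρ ^ d := by
    intro y ρ hρ
    by_cases h : ρ ≤ dM
    · refine (hreg y ρ hρ h).2.trans ?_
      have h1 := le_max_left Ctop (dM ^ d)⁻¹
      nlinarith [pow_nonneg hρ.le d]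
    · push_neg at h
      have h1 : (σ (ball y ρ)).toReal ≤ 1 := by
        have := ENNReal.toReal_mono ENNReal.one_ne_top (prob_le_one (μ := σ) (s := ball y ρ))
        simpa using this
      have h2 : dM ^ d ≤ ρ ^ d := pow_le_pow_left₀ hdM0.le h.le d
      have h3 : (0:ℝ) < dM ^ d := by positivity
      have h4 : (1:ℝ) ≤ (dM ^ d)⁻¹ * ρ ^ d := by
        rw [inv_mul_eq_div, le_div_iff₀ h3]; linarith
      have h5 : (dM ^ d)⁻¹ ≤ Ct2 := le_max_right _ _
      have h6 : (dM ^ d)⁻¹ * ρ ^ d ≤ Ct2 * ρ ^ d := by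
        have : (0:ℝ) ≤ ρ ^ d := pow_nonneg hρ.le d
        nlinarith
      linarith
  have hsingle : ∀ x : M, σ {x} = 0 := by
    intro x
    have h1 : ∀ ρ : ℝ, 0 < ρ → (σ {x}).toReal ≤ Ct2 * ρ ^ d := by
      intro ρ hρ
      refine le_trans (ENNReal.toReal_mono (measure_ne_top σ _) (measure_mono ?_)) (hup x ρ hρ)
      simp [Set.singleton_subset_iff, mem_ball, hρ]
    have h2 : Tendsto (fun ρ : ℝ => Ct2 * ρ ^ d) (nhdsWithin 0 (Ioi 0)) (nhds 0) := by
      have hc : Continuous fun ρ : ℝ => Ct2 * ρ ^ d := by continuity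
      have := (hc.tendsto 0).mono_left (nhdsWithin_le_nhds (s := Ioi (0:ℝ)))
      simpa [zero_pow (by omega : d ≠ 0)] using this
    have h3 : (σ {x}).toReal ≤ 0 :=
      ge_of_tendsto h2 (eventually_nhdsWithin_of_forall fun ρ hρ => h1 ρ hρ)
    have h4 : (σ {x}).toReal = 0 := le_antisymm h3 ENNReal.toReal_nonneg
    exact ((ENNReal.toReal_eq_zero_iff _).1 h4).resolve_right (measure_ne_top σ _)
  clear_value dM Ct2
  have hγd : (0:ℝ) < γ ^ d := by positivity
  set K : ℝ := Ct2 / Cbot * 3 ^ d / γ ^ d + Ct2 + 2 / γ ^ d with hKdef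
  have hK0 : 0 < K := by rw [hKdef]; positivity
  set C : ℝ := K * (s / ((d:ℝ) - s)) * γ ^ ((d:ℝ) - s) + 2 * γ ^ (-s) with hCdef
  have hC0 : 0 < C := by rw [hCdef]; positivity
  clear_value K C
  refine ⟨C, hC0, 1/2, by norm_num, by norm_num, ?_⟩
  intro X hXne hsep D hND hDhalf hRdiam hdisc
  set N := X.card with hNdef
  have hN0 : 0 < N := Finset.card_pos.2 hXne
  have hNR : (0:ℝ) < N := by exact_mod_cast hN0
  clear_value N
  have hD0 : 0 < D := lt_trans (one_div_pos.2 hNR) hND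
  set R : ℝ := γ * D ^ ((1:ℝ)/(d:ℝ)) with hRdef
  have hDrp : (0:ℝ) < D ^ ((1:ℝ)/(d:ℝ)) := Real.rpow_pos_of_pos hD0 _
  have hR0 : 0 < R := by rw [hRdef]; exact mul_pos hγ hDrp
  have hRdM : R < dM := hRdiam
  set δ : ℝ := γ * (N:ℝ) ^ (-(1:ℝ)/(d:ℝ)) with hδdef
  have hδ0 : 0 < δ := by rw [hδdef]; exact mul_pos hγ (Real.rpow_pos_of_pos hNR _)
  have hδR : δ < R := by
    have h1 : ((N:ℝ))⁻¹ < D := by rw [← one_div]; exact hND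
    have h2 : ((N:ℝ)) ^ (-(1:ℝ)/(d:ℝ)) = ((N:ℝ)⁻¹) ^ ((1:ℝ)/(d:ℝ)) := by
      have h : (-(1:ℝ))/(d:ℝ) = (-1) * (1/(d:ℝ)) := by ring
      rw [h, Real.rpow_mul (Nat.cast_nonneg N), Real.rpow_neg_one]
    have h3 : ((N:ℝ)⁻¹) ^ ((1:ℝ)/(d:ℝ)) < D ^ ((1:ℝ)/(d:ℝ)) :=
      Real.rpow_lt_rpow (inv_nonneg.2 hNR.le) h1 (one_div_pos.2 hdR0)
    rw [hδdef, hRdef, h2]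
    exact mul_lt_mul_of_pos_left h3 hγ
  have hδdM : δ ≤ dM := (hδR.trans hRdM).le
  have hNδ : (N:ℝ) * δ ^ d = γ ^ d := by
    rw [hδdef, mul_pow, ← Real.rpow_natCast ((N:ℝ) ^ (-(1:ℝ)/(d:ℝ))) d,
      ← Real.rpow_mul (Nat.cast_nonneg N)]
    have h : (-(1:ℝ)/(d:ℝ)) * (d:ℝ) = -1 := by
      rw [div_mul_eq_mul_div, mul_div_assoc, div_self hdR0.ne', mul_one]
    rw [h, Real.rpow_neg_one, mul_comm (γ ^ d) ((N:ℝ))⁻¹, ← mul_assoc,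
      mul_inv_cancel₀ hNR.ne', one_mul]
  have hδpow : δ ^ d = γ ^ d / (N:ℝ) := by
    rw [eq_div_iff hNR.ne']
    linarith [hNδ]
  have hRd : R ^ d = γ ^ d * D := by
    rw [hRdef, mul_pow, ← Real.rpow_natCast (D ^ ((1:ℝ)/(d:ℝ))) d, ← Real.rpow_mul hD0.le]
    have h : (1:ℝ)/(d:ℝ) * (d:ℝ) = 1 := by
      rw [div_mul_eq_mul_div, mul_div_assoc, div_self hdR0.ne', mul_one]
    rw [h, Real.rpow_one]
  clear_value R δ
  -- pointwise discrepancy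
  have hdiscpt : ∀ (x : M) (r : ℝ), 0 < r →
      |((X.filter (fun z => dist x z < r)).card : ℝ) / (N:ℝ) - (σ (ball x r)).toReal| ≤ D := by
    intro x r hr
    have h1 := ballDisc_le σ X hXne x hr
    have h2 : ((X : Set M) ∩ ball x r) = ((X.filter (fun z => dist x z < r)) : Set M) := by
      ext z
      simp only [Set.mem_inter_iff, Finset.coe_filter, Set.mem_setOf_eq, Finset.mem_coe,
        mem_ball]
      rw [dist_comm]
    rw [h2, Set.ncard_coe_finset, ← hNdef] at h1
    exact le_trans h1 hdisc
  -- count relation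
  have hcard : ∀ x ∈ X, ∀ r : ℝ, 0 < r →
      ((X.filter (fun z => dist x z < r)).card : ℝ)
        = (((X.erase x).filter (fun z => dist x z < r)).card : ℝ) + 1 := by
    intro x hx r hr
    have hxmem : x ∈ X.filter (fun z => dist x z < r) :=
      Finset.mem_filter.2 ⟨hx, by simpa using hr⟩
    have h1 : (X.erase x).filter (fun z => dist x z < r)
        = (X.filter (fun z => dist x z < r)).erase x := Finset.filter_erase _ x X
    rw [h1, Finset.card_erase_of_mem hxmem]
    have h2 : 1 ≤ (X.filter (fun z => dist x z < r)).card := Finset.card_pos.2 ⟨x, hxmem⟩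
    rw [Nat.cast_sub h2]
    push_cast
    ring
  -- packing bound
  have hnu : ∀ x ∈ X, ∀ r : ℝ, 0 < r →
      (((X.erase x).filter (fun z => dist x z < r)).card : ℝ)
        ≤ Ct2 / Cbot * 3 ^ d / γ ^ d * r ^ d * (N:ℝ) := by
    intro x hx r hr
    by_cases hrδ : r ≤ δ
    · have hempty : (X.erase x).filter (fun z => dist x z < r) = ∅ := by
        rw [Finset.filter_eq_empty_iff]
        intro y hy
        have h1 : y ≠ x := (Finset.mem_erase.1 hy).1
        have h2 := hsep x hx y (Finset.mem_erase.1 hy).2 h1.symm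
        exact not_lt.2 (le_trans hrδ h2.le)
      rw [hempty]
      simp only [Finset.card_empty, Nat.cast_zero]
      have h9 : (0:ℝ) ≤ Ct2 / Cbot * 3 ^ d / γ ^ d := by positivity
      exact mul_nonneg (mul_nonneg h9 (pow_nonneg hr.le d)) (Nat.cast_nonneg N)
    · push_neg at hrδ
      set T := (X.erase x).filter (fun z => dist x z < r) with hT
      have hsepT : ∀ y ∈ T, ∀ z ∈ T, y ≠ z → δ < dist y z := by
        intro y hy z hz hyz
        have hyX : y ∈ X := Finset.mem_of_mem_erase (Finset.mem_filter.1 hy).1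
        have hzX : z ∈ X := Finset.mem_of_mem_erase (Finset.mem_filter.1 hz).1
        exact hsep y hyX z hzX hyz
      have hTr : ∀ y ∈ T, y ∈ ball x r := by
        intro y hy
        have h := (Finset.mem_filter.1 hy).2
        rwa [mem_ball, dist_comm]
      have hlow : ∀ (y : M) (ρ : ℝ), 0 < ρ → ρ ≤ diam (Set.univ : Set M) →
          Cbot * ρ ^ d ≤ (σ (ball y ρ)).toReal :=
        fun y ρ h1 h2 => (hreg y ρ h1 (by rwa [← hdMdef] at h2)).1
      have hpack := packing σ d hlow hup hδ0 (by rw [← hdMdef]; exact hδdM) hsepT hr hTr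
      have h1 : (r + δ/2 : ℝ) ^ d ≤ (3/2 * r) ^ d :=
        pow_le_pow_left₀ (by linarith) (by linarith) d
      have h2 : (T.card : ℝ) * (Cbot * (δ/2)^d) ≤ Ct2 * (3/2*r)^d :=
        le_trans hpack (mul_le_mul_of_nonneg_left h1 hCt2.le)
      have hkey : Ct2 / Cbot * 3 ^ d / γ ^ d * r ^ d * (N:ℝ) * (Cbot * (δ/2)^d)
          = Ct2 * (3/2*r)^d := by
        have h3 : ((δ:ℝ)/2)^d = δ^d/2^d := div_pow δ 2 d
        have h4 : ((3:ℝ)/2*r)^d = 3^d * r^d / 2^d := by rw [mul_pow, div_pow]; ring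
        have hCbne : Cbot ≠ 0 := hCbot.ne'
        have hγdne : γ ^ d ≠ 0 := hγd.ne'
        have h2dne : ((2:ℝ)) ^ d ≠ 0 := by positivity
        have hNne : ((N:ℝ)) ≠ 0 := hNR.ne'
        rw [h3, h4, hδpow]
        field_simp
      have h5 : (0:ℝ) < Cbot * (δ/2)^d := mul_pos hCbot (pow_pos (by linarith) d)
      have h6 : (T.card : ℝ) * (Cbot * (δ/2)^d)
          ≤ Ct2 / Cbot * 3 ^ d / γ ^ d * r ^ d * (N:ℝ) * (Cbot * (δ/2)^d) := by
        rw [hkey]; exact h2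
      exact le_of_mul_le_mul_right h6 h5
  -- main pointwise kernel-vs-measure bound
  have hdiff : ∀ x ∈ X, ∀ r : ℝ, 0 < r →
      |(((X.erase x).filter (fun z => dist x z < r)).card : ℝ)/(N:ℝ) - (σ (ball x r)).toReal|
        ≤ min (2*D) (K * r ^ ((d:ℝ))) := by
    intro x hx r hr0
    rw [Real.rpow_natCast]
    set a : ℝ := (((X.erase x).filter (fun z => dist x z < r)).card : ℝ)/(N:ℝ) with ha
    set b : ℝ := (σ (ball x r)).toReal with hb
    have hb0 : 0 ≤ b := ENNReal.toReal_nonneg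
    have ha0 : 0 ≤ a := div_nonneg (Nat.cast_nonneg _) hNR.le
    have haK : a ≤ Ct2 / Cbot * 3 ^ d / γ ^ d * r ^ d := by
      rw [ha, div_le_iff₀ hNR]
      exact hnu x hx r hr0
    have hbK : b ≤ Ct2 * r ^ d := hup x r hr0
    have h2D : |a - b| ≤ 2 * D := by
      have h1 := hdiscpt x r hr0
      have h2 := hcard x hx r hr0
      have h3 : ((X.filter (fun z => dist x z < r)).card : ℝ)/(N:ℝ) - b = (a - b) + 1/(N:ℝ) := by
        rw [h2, ha]; ring
      have h4 : (1:ℝ)/(N:ℝ) ≤ D := le_of_lt hND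
      have h5 : |a - b| ≤ |(a - b) + 1/(N:ℝ)| + 1/(N:ℝ) := by
        have := abs_add_le ((a - b) + 1/(N:ℝ)) (-(1/(N:ℝ)))
        simp only [add_neg_cancel_right] at this
        have h6 : |(-(1/(N:ℝ)))| = 1/(N:ℝ) := by
          rw [abs_neg, abs_of_nonneg (one_div_nonneg.2 hNR.le)]
        linarith [this, h6.le]
      rw [← h3] at h5
      linarith
    have hKb : |a - b| ≤ K * r ^ d := by
      have hrd : (0:ℝ) < r ^ d := pow_pos hr0 d
      have hcoef1 : (0:ℝ) ≤ Ct2 / Cbot * 3 ^ d / γ ^ d := by positivity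
      have hcoef2 : (0:ℝ) ≤ 2 / γ ^ d := by positivity
      rcases le_or_gt R r with hRr | hrR
      · have h2 : R^d ≤ r^d := pow_le_pow_left₀ hR0.le hRr d
        rw [hRd] at h2
        have h1 : 2 * D ≤ 2/γ^d * r^d := by
          rw [div_mul_eq_mul_div, le_div_iff₀ hγd]
          linarith
        have h3 : 2/γ^d * r^d ≤ K * r^d := by
          have hKK : 2/γ^d ≤ K := by
            rw [hKdef]; linarith [hCt2.le, hcoef1]
          nlinarith
        exact h2D.trans (h1.trans h3)
      · have h1 : a - b ≤ K * r^d := by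
          have h2 : Ct2 / Cbot * 3 ^ d / γ ^ d * r ^ d ≤ K * r ^ d := by
            have : Ct2 / Cbot * 3 ^ d / γ ^ d ≤ K := by
              rw [hKdef]; linarith [hCt2.le, hcoef2]
            nlinarith
          linarith
        have h2 : -(K * r^d) ≤ a - b := by
          have h3 : Ct2 * r ^ d ≤ K * r ^ d := by
            have : Ct2 ≤ K := by rw [hKdef]; linarith [hcoef1, hcoef2]
            nlinarith
          linarith
        exact abs_le.2 ⟨h2, h1⟩
    exact le_min h2D hKb
  -- bound for the min-function integral
  obtain ⟨hgmin, hgminb⟩ := integral_min_bound (d := (d:ℝ)) hs0 hdsR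
    (a := 2*D) (K := K) (by linarith) hK0.le hR0
  -- per-point estimate
  have hmain : ∀ x ∈ X,
      |(∑ y ∈ X.erase x, dist x y ^ (-s)) / (N:ℝ) - ∫ y, dist x y ^ (-s) ∂σ|
        ≤ C * D ^ (1 - s/(d:ℝ)) := by
    intro x hx
    have hTpos : ∀ y ∈ X.erase x, 0 < dist x y := by
      intro y hy
      have h1 : y ≠ x := (Finset.mem_erase.1 hy).1
      have h2 := hsep x hx y (Finset.mem_erase.1 hy).2 h1.symm
      exact lt_trans hδ0 h2
    obtain ⟨hint1, heq1⟩ := sum_eq hs0 x (X.erase x) hTpos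
    have heq2 := pot_eq σ hs0 x (hsingle x)
    have hσm : Measurable (fun r : ℝ => (σ (ball x r)).toReal) := by
      have hmono : Monotone fun r : ℝ => σ (ball x r) :=
        fun u v huv => measure_mono (ball_subset_ball huv)
      exact hmono.measurable.ennreal_toReal
    have hφm : Measurable fun r : ℝ => s * r ^ (-s - 1) := by fun_prop
    have hφnn : ∀ r : ℝ, 0 < r → 0 ≤ s * r ^ (-s - 1) := fun r hr => by positivity
    set nT : ℝ → ℝ := fun r => (((X.erase x).filter (fun z => dist x z < r)).card : ℝ) with hnT
    have hf1 : IntegrableOn (fun r : ℝ => s * r ^ (-s - 1) * (nT r / (N:ℝ))) (Ioi 0) := by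
      have h := hint1.const_mul ((N:ℝ)⁻¹)
      refine h.congr (Eventually.of_forall fun r => ?_)
      simp only [hnT]
      ring
    obtain ⟨hgdom, -⟩ := integral_min_bound (d := (d:ℝ)) hs0 hdsR
      (a := 1) (K := Ct2) zero_le_one hCt2.le one_pos
    have hf2 : IntegrableOn (fun r : ℝ => s * r ^ (-s - 1) * (σ (ball x r)).toReal) (Ioi 0) := by
      refine hgdom.mono' ((hφm.mul hσm).aestronglyMeasurable.restrict) ?_
      refine (ae_restrict_iff' measurableSet_Ioi).2 (Eventually.of_forall fun r hr => ?_)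
      rw [Real.norm_eq_abs, abs_of_nonneg (mul_nonneg (hφnn r hr) ENNReal.toReal_nonneg)]
      refine mul_le_mul_of_nonneg_left (le_min ?_ ?_) (hφnn r hr)
      · have := ENNReal.toReal_mono ENNReal.one_ne_top (prob_le_one (μ := σ) (s := ball x r))
        simpa using this
      · rw [Real.rpow_natCast]; exact hup x r hr
    have hAint : (∑ y ∈ X.erase x, dist x y ^ (-s)) / (N:ℝ)
        = ∫ r in Ioi (0:ℝ), s * r ^ (-s - 1) * (nT r / (N:ℝ)) := by
      rw [heq1, div_eq_inv_mul, ← integral_const_mul]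
      exact setIntegral_congr_fun measurableSet_Ioi (fun r _ => by simp only [hnT]; ring)
    have habs : ∀ r ∈ Ioi (0:ℝ),
        |s * r ^ (-s - 1) * (nT r / (N:ℝ)) - s * r ^ (-s - 1) * (σ (ball x r)).toReal|
          ≤ s * r ^ (-s - 1) * min (2*D) (K * r ^ ((d:ℝ))) := by
      intro r hr
      rw [← mul_sub, abs_mul, abs_of_nonneg (hφnn r hr)]
      exact mul_le_mul_of_nonneg_left (hdiff x hx r hr) (hφnn r hr)
    calc |(∑ y ∈ X.erase x, dist x y ^ (-s)) / (N:ℝ) - ∫ y, dist x y ^ (-s) ∂σ|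
        = |∫ r in Ioi (0:ℝ), (s * r ^ (-s - 1) * (nT r / (N:ℝ))
            - s * r ^ (-s - 1) * (σ (ball x r)).toReal)| := by
          rw [hAint, heq2, integral_sub hf1 hf2]
      _ ≤ ∫ r in Ioi (0:ℝ), |s * r ^ (-s - 1) * (nT r / (N:ℝ))
            - s * r ^ (-s - 1) * (σ (ball x r)).toReal| := by
          simpa [Real.norm_eq_abs] using
            MeasureTheory.norm_integral_le_integral_norm (μ := volume.restrict (Ioi (0:ℝ)))
              (f := fun r : ℝ => s * r ^ (-s - 1) * (nT r / (N:ℝ))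
                - s * r ^ (-s - 1) * (σ (ball x r)).toReal)
      _ ≤ ∫ r in Ioi (0:ℝ), s * r ^ (-s - 1) * min (2*D) (K * r ^ ((d:ℝ))) := by
          refine integral_mono_ae ((hf1.sub hf2).abs) hgmin ?_
          exact (ae_restrict_iff' measurableSet_Ioi).2 (Eventually.of_forall habs)
      _ ≤ K * (s / ((d:ℝ) - s)) * R ^ ((d:ℝ) - s) + (2*D) * R ^ (-s) := hgminb
      _ = C * D ^ (1 - s/(d:ℝ)) := by
          have e1 : R ^ ((d:ℝ) - s) = γ ^ ((d:ℝ)-s) * D ^ (1 - s/(d:ℝ)) := by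
            rw [hRdef, Real.mul_rpow hγ.le (Real.rpow_nonneg hD0.le _),
              ← Real.rpow_mul hD0.le]
            congr 1
            rw [one_div_mul_eq_div, sub_div, div_self hdR0.ne']
          have e2 : R ^ (-s) = γ ^ (-s) * D ^ (-(s/(d:ℝ))) := by
            rw [hRdef, Real.mul_rpow hγ.le (Real.rpow_nonneg hD0.le _),
              ← Real.rpow_mul hD0.le]
            congr 1
            rw [one_div_mul_eq_div, neg_div]
          have e3 : D * D ^ (-(s/(d:ℝ))) = D ^ (1 - s/(d:ℝ)) := by
            rw [show (1 - s/(d:ℝ)) = 1 + (-(s/(d:ℝ))) by ring, Real.rpow_add hD0,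
              Real.rpow_one]
          rw [e1, e2, hCdef]
          calc K * (s / ((d:ℝ) - s)) * (γ ^ ((d:ℝ)-s) * D ^ (1 - s/(d:ℝ)))
              + (2*D) * (γ ^ (-s) * D ^ (-(s/(d:ℝ))))
              = K * (s / ((d:ℝ) - s)) * γ ^ ((d:ℝ)-s) * D ^ (1 - s/(d:ℝ))
                + 2 * γ ^ (-s) * (D * D ^ (-(s/(d:ℝ)))) := by ring
            _ = (K * (s / ((d:ℝ) - s)) * γ ^ ((d:ℝ)-s) + 2 * γ ^ (-s)) * D ^ (1 - s/(d:ℝ)) := by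
                rw [e3]; ring
  -- assembly
  have hsplit : rieszEnergy s X - (1/(N:ℝ)) * ∑ x ∈ X, ∫ y, dist x y ^ (-s) ∂σ
      = ∑ x ∈ X, (1/(N:ℝ))
          * ((∑ y ∈ X.erase x, dist x y ^ (-s))/(N:ℝ) - ∫ y, dist x y ^ (-s) ∂σ) := by
    rw [rieszEnergy, ← hNdef, Finset.mul_sum, Finset.mul_sum, ← Finset.sum_sub_distrib]
    refine Finset.sum_congr rfl fun x hx => ?_
    ring
  rw [hsplit]
  calc |∑ x ∈ X, (1/(N:ℝ))
          * ((∑ y ∈ X.erase x, dist x y ^ (-s))/(N:ℝ) - ∫ y, dist x y ^ (-s) ∂σ)|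
      ≤ ∑ x ∈ X, |(1/(N:ℝ))
          * ((∑ y ∈ X.erase x, dist x y ^ (-s))/(N:ℝ) - ∫ y, dist x y ^ (-s) ∂σ)| :=
        Finset.abs_sum_le_sum_abs _ _
    _ ≤ ∑ _x ∈ X, (1/(N:ℝ)) * (C * D ^ (1 - s/(d:ℝ))) := by
        refine Finset.sum_le_sum fun x hx => ?_
        rw [abs_mul, abs_of_nonneg (one_div_nonneg.2 hNR.le)]
        exact mul_le_mul_of_nonneg_left (hmain x hx) (one_div_nonneg.2 hNR.le)
    _ = (N:ℝ) * ((1/(N:ℝ)) * (C * D ^ (1 - s/(d:ℝ)))) := by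
        rw [Finset.sum_const, nsmul_eq_mul, ← hNdef]
    _ = C * D ^ (1 - s/(d:ℝ)) := by
        rw [← mul_assoc, mul_one_div, div_self hNR.ne', one_mul]
end

section
/- Assume the Regularity hypothesis and the Blümlinger density hypothesis. Fix a real number s with 0 < s < d. Then there exist constants C > 0 and D0 ∈ (0, 1) such that for every nonempty finite subset X ⊆ M with N := |X| and every D ∈ (0, D0] with D(X) ≤ D, the quadrature error of the mean Riesz s-potential satisfies |(1/N) Σ_{x ∈ X} U(x) − ∫_M U(x) dσ(x)| ≤ C · D^{(d−s)/(d²+2d−s)}. -/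
open MeasureTheory Metric Filter

section AuxLemmas

open Set
open scoped ENNReal


lemma meas_min_rpow {M : Type*} [MetricSpace M] [MeasurableSpace M] [BorelSpace M]
    (y : M) (s T : ℝ) : Measurable (fun z : M => min (dist z y ^ (-s)) T) := by
  have h1 : Measurable fun x : ℝ => x ^ (-s) := by measurability
  exact (h1.comp (continuous_id.dist continuous_const).measurable).min measurable_const

lemma superlevel_eq {M : Type*} [MetricSpace M] {s t : ℝ} (hs : 0 < s) (ht : 0 < t) (y : M) :
    {z : M | t < dist z y ^ (-s)} = ball y (t ^ (-s)⁻¹) \ {y} := by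
  ext z
  simp only [mem_setOf_eq, mem_diff, mem_ball, mem_singleton_iff]
  rcases eq_or_ne z y with rfl | hzy
  · simp only [dist_self, ne_eq, not_true_eq_false, and_false, iff_false, not_lt]
    rw [Real.zero_rpow (by intro h; rw [neg_eq_zero] at h; exact hs.ne' h : -s ≠ 0)]
    exact ht.le
  · have hρ : 0 < dist z y := dist_pos.2 hzy
    simp only [hzy, not_false_eq_true, and_true]
    exact (Real.lt_rpow_inv_iff_of_neg hρ ht (by linarith : -s < 0)).symm

lemma superlevel_min_eq {M : Type*} [MetricSpace M] {s t T : ℝ} (hs : 0 < s) (ht : 0 < t)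
    (htT : t < T) (y : M) :
    {z : M | t < min (dist z y ^ (-s)) T} = ball y (t ^ (-s)⁻¹) \ {y} := by
  rw [← superlevel_eq hs ht]
  ext z
  simp only [mem_setOf_eq, lt_min_iff, htT, and_true]

lemma superlevel_min_empty {M : Type*} [MetricSpace M] {s t T : ℝ} (hTt : T ≤ t) (y : M) :
    {z : M | t < min (dist z y ^ (-s)) T} = ∅ := by
  ext z
  simp only [mem_setOf_eq, lt_min_iff, mem_empty_iff_false, iff_false, not_and]
  intro _
  exact not_lt.2 hTt

lemma card_filter_eqOn_sum {M : Type*} (X : Finset M) (φ : M → ℝ) :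
    EqOn (fun t : ℝ => ∑ x ∈ X, (Ioo (0:ℝ) (φ x)).indicator (fun _ => (1:ℝ)) t)
      (fun t => ((X.filter (fun x => t < φ x)).card : ℝ)) (Ioi (0:ℝ)) := by
  intro t ht
  simp only
  rw [Finset.card_filter]
  push_cast
  refine Finset.sum_congr rfl fun x _ => ?_
  by_cases h : t < φ x
  · simp [indicator, mem_Ioo, h, mem_Ioi.1 ht]
  · simp [indicator, mem_Ioo, h, mem_Ioi.1 ht]

lemma integrable_indicator_sum {M : Type*} (X : Finset M) (φ : M → ℝ) :
    Integrable (fun t : ℝ => ∑ x ∈ X, (Ioo (0:ℝ) (φ x)).indicator (fun _ => (1:ℝ)) t)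
      (volume.restrict (Ioi (0:ℝ))) := by
  refine integrable_finset_sum X fun x _ => ?_
  rw [integrable_indicator_iff measurableSet_Ioo]
  refine integrableOn_const (ne_of_lt ?_)
  exact lt_of_le_of_lt (Measure.restrict_apply_le _ _)
    (by rw [Real.volume_Ioo]; exact ENNReal.ofReal_lt_top)

lemma integrableOn_card_filter {M : Type*} (X : Finset M) (φ : M → ℝ) :
    IntegrableOn (fun t => ((X.filter (fun x => t < φ x)).card : ℝ)) (Ioi (0:ℝ)) volume :=
  MeasureTheory.IntegrableOn.congr_fun (integrable_indicator_sum X φ)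
    (card_filter_eqOn_sum X φ) measurableSet_Ioi

/-- Discrete layer-cake for a finite sum. -/
lemma sum_eq_integral_card {M : Type*} (X : Finset M) (φ : M → ℝ) (hφ0 : ∀ x, 0 ≤ φ x) :
    ∑ x ∈ X, φ x = ∫ t in Ioi (0:ℝ), ((X.filter (fun x => t < φ x)).card : ℝ) := by
  classical
  have key : ∀ x ∈ X, φ x = ∫ t in Ioi (0:ℝ), (Ioo (0:ℝ) (φ x)).indicator (fun _ => (1:ℝ)) t := by
    intro x _
    rw [setIntegral_indicator measurableSet_Ioo,
      inter_eq_self_of_subset_right Ioo_subset_Ioi_self, setIntegral_const,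
      measureReal_def, Real.volume_Ioo, sub_zero, ENNReal.toReal_ofReal (hφ0 x), smul_eq_mul, mul_one]
  rw [Finset.sum_congr rfl key]
  have hint : ∀ x ∈ X, Integrable ((Ioo (0:ℝ) (φ x)).indicator (fun _ => (1:ℝ)))
      (volume.restrict (Ioi (0:ℝ))) := by
    intro x _
    rw [integrable_indicator_iff measurableSet_Ioo]
    refine integrableOn_const (ne_of_lt ?_)
    exact lt_of_le_of_lt (Measure.restrict_apply_le _ _)
      (by rw [Real.volume_Ioo]; exact ENNReal.ofReal_lt_top)
  rw [← integral_finset_sum X hint]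
  exact setIntegral_congr_fun measurableSet_Ioi (card_filter_eqOn_sum X φ)

lemma per_y_error {M : Type*} [MetricSpace M] [MeasurableSpace M] [BorelSpace M]
    (σ : Measure M) [IsProbabilityMeasure σ]
    {s T D : ℝ} (hs : 0 < s) (hT : 0 < T) (hD : 0 < D)
    (X : Finset M) (hX : X.Nonempty)
    (hdisc : ∀ (y : M) (r : ℝ), 0 < r →
      |(((X : Set M) ∩ ball y r).ncard : ℝ) / X.card - (σ (ball y r)).toReal| ≤ D)
    (hN : 1 / (X.card : ℝ) ≤ D)
    (hsing : ∀ y : M, σ {y} = 0)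
    (y : M) :
    |(X.card : ℝ)⁻¹ * (∑ x ∈ X, min (dist x y ^ (-s)) T) - ∫ x, min (dist x y ^ (-s)) T ∂σ|
      ≤ 2 * D * T := by
  classical
  set φ : M → ℝ := fun z => min (dist z y ^ (-s)) T with hφdef
  have hφm : Measurable φ := meas_min_rpow y s T
  have hφ0 : ∀ z, 0 ≤ φ z := fun z => le_min (Real.rpow_nonneg dist_nonneg _) hT.le
  have hφT : ∀ z, φ z ≤ T := fun z => min_le_right _ _
  have hφint : Integrable φ σ :=
    (integrable_const T).mono' hφm.aestronglyMeasurable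
      (Eventually.of_forall fun z => by
        rw [Real.norm_eq_abs, abs_of_nonneg (hφ0 z)]; exact hφT z)
  have hσrep : ∫ x, φ x ∂σ = ∫ t in Ioi (0:ℝ), ((σ {z | t < φ z}).toReal) :=
    hφint.integral_eq_integral_meas_lt (Eventually.of_forall hφ0)
  have hXrep : ∑ x ∈ X, φ x = ∫ t in Ioi (0:ℝ), ((X.filter (fun x => t < φ x)).card : ℝ) :=
    sum_eq_integral_card X φ hφ0
  set F1 : ℝ → ℝ := fun t => (X.card : ℝ)⁻¹ * ((X.filter (fun x => t < φ x)).card : ℝ) with hF1def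
  set F2 : ℝ → ℝ := fun t => (σ {z | t < φ z}).toReal with hF2def
  have hF1int : IntegrableOn F1 (Ioi (0:ℝ)) volume :=
    (integrableOn_card_filter X φ).const_mul _
  -- integrability of F2
  have hanti : Antitone fun t : ℝ => σ {z | t < φ z} :=
    fun a b hab => measure_mono fun z hz => lt_of_le_of_lt hab hz
  have hF2meas : Measurable F2 := ENNReal.measurable_toReal.comp hanti.measurable
  have hF2bd : ∀ t, F2 t ≤ 1 := by
    intro t
    have h1 : σ {z | t < φ z} ≤ σ univ := measure_mono (subset_univ _)
    have := ENNReal.toReal_mono (measure_ne_top σ univ) h1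
    simpa [measure_univ] using this
  have hF2zero : ∀ t, T ≤ t → F2 t = 0 := by
    intro t hTt
    have : {z | t < φ z} = ∅ := superlevel_min_empty hTt y
    simp [hF2def, this]
  have hF2int : IntegrableOn F2 (Ioi (0:ℝ)) volume := by
    have h1 : IntegrableOn F2 (Ioc (0:ℝ) T) volume := by
      have hc : Integrable (fun _ : ℝ => (1:ℝ)) (volume.restrict (Ioc (0:ℝ) T)) :=
        integrableOn_const (by rw [Real.volume_Ioc]; exact ENNReal.ofReal_ne_top)
      refine hc.mono' hF2meas.aestronglyMeasurable (Eventually.of_forall fun t => ?_)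
      rw [Real.norm_eq_abs, abs_of_nonneg ENNReal.toReal_nonneg]
      exact hF2bd t
    have h2 : IntegrableOn F2 (Ioi T) volume :=
      (integrableOn_zero).congr_fun (fun t ht => (hF2zero t (le_of_lt ht)).symm) measurableSet_Ioi
    have := h1.union h2
    rwa [Ioc_union_Ioi_eq_Ioi hT.le] at this
  have hNpos : (0:ℝ) < X.card := by exact_mod_cast Finset.card_pos.mpr hX
  -- pointwise bound on Ioc 0 T
  have hptwise : ∀ t ∈ Ioc (0:ℝ) T, ‖F1 t - F2 t‖ ≤ 2 * D := by
    intro t ht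
    obtain ⟨ht0, htT⟩ := ht
    by_cases hlt : t < T
    · set r : ℝ := t ^ (-s)⁻¹ with hrdef
      have hr : 0 < r := Real.rpow_pos_of_pos ht0 _
      have hset : {z | t < φ z} = ball y r \ {y} := superlevel_min_eq hs ht0 hlt y
      have hF2t : F2 t = (σ (ball y r)).toReal := by
        rw [hF2def]; simp only; rw [hset, measure_diff_null (hsing y)]
      set A : Set M := (X : Set M) ∩ ball y r with hAdef
      set B : Set M := (X : Set M) ∩ (ball y r \ {y}) with hBdef
      have hAfin : A.Finite := X.finite_toSet.inter_of_left _
      have hBfin : B.Finite := X.finite_toSet.inter_of_left _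
      have hcard : ((X.filter (fun x => t < φ x)).card : ℝ) = (B.ncard : ℝ) := by
        have hcoe : (↑(X.filter (fun x => t < φ x)) : Set M) = B := by
          ext z
          simp only [Finset.coe_filter, mem_setOf_eq, hBdef, mem_inter_iff, Finset.mem_coe]
          constructor
          · rintro ⟨hzX, hzφ⟩
            exact ⟨hzX, hset ▸ hzφ⟩
          · rintro ⟨hzX, hz⟩
            exact ⟨hzX, by rw [← hset] at hz; exact hz⟩
        rw [← hcoe, Set.ncard_coe_finset]
      have hBA : B ⊆ A := inter_subset_inter_right _ diff_subset
      have hABu : A ⊆ B ∪ {y} := by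
        intro z hz
        rcases eq_or_ne z y with rfl | hzy
        · exact Or.inr rfl
        · exact Or.inl ⟨hz.1, hz.2, hzy⟩
      have hBleA : (B.ncard : ℝ) ≤ A.ncard := by
        exact_mod_cast Set.ncard_le_ncard hBA hAfin
      have hAleB : (A.ncard : ℝ) ≤ B.ncard + 1 := by
        have h1 : A.ncard ≤ (B ∪ {y}).ncard :=
          Set.ncard_le_ncard hABu (hBfin.union (finite_singleton y))
        have h2 : (B ∪ {y}).ncard ≤ B.ncard + ({y} : Set M).ncard := Set.ncard_union_le _ _
        have h3 : ({y} : Set M).ncard = 1 := Set.ncard_singleton y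
        exact_mod_cast (h1.trans (h3 ▸ h2))
      have hdiscA : |(A.ncard : ℝ) / X.card - (σ (ball y r)).toReal| ≤ D := hdisc y r hr
      have hF1t : F1 t = (B.ncard : ℝ) / X.card := by
        rw [hF1def]; simp only; rw [hcard, inv_mul_eq_div]
      rw [Real.norm_eq_abs, hF1t, hF2t]
      have habs : |(B.ncard : ℝ) - (A.ncard : ℝ)| ≤ 1 := abs_le.2 ⟨by linarith, by linarith⟩
      have hstep : |(B.ncard : ℝ) / X.card - (A.ncard : ℝ) / X.card| ≤ 1 / X.card := by
        rw [div_sub_div_same, abs_div, abs_of_pos hNpos]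
        gcongr
      calc |(B.ncard : ℝ) / X.card - (σ (ball y r)).toReal|
          ≤ |(B.ncard : ℝ) / X.card - (A.ncard : ℝ) / X.card|
            + |(A.ncard : ℝ) / X.card - (σ (ball y r)).toReal| := abs_sub_le _ _ _
        _ ≤ 1 / X.card + D := add_le_add hstep hdiscA
        _ ≤ D + D := add_le_add hN le_rfl
        _ = 2 * D := by ring
    · -- t = T case
      have hTt : T ≤ t := not_lt.1 hlt
      have hfilt : (X.filter (fun x => t < φ x)) = ∅ := by
        refine Finset.filter_false_of_mem fun x _ => ?_
        exact not_lt.2 ((hφT x).trans hTt)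
      have : F1 t = 0 := by rw [hF1def]; simp [hfilt]
      rw [Real.norm_eq_abs, this, hF2zero t hTt]
      simp
      positivity
  -- put it together
  have hLHS : (X.card : ℝ)⁻¹ * (∑ x ∈ X, φ x) - ∫ x, φ x ∂σ
      = ∫ t in Ioi (0:ℝ), (F1 t - F2 t) := by
    rw [hXrep, hσrep, ← integral_const_mul, ← integral_sub hF1int hF2int]
  have hF12 : IntegrableOn (fun t => F1 t - F2 t) (Ioi (0:ℝ)) volume := hF1int.sub hF2int
  have hzero : ∫ t in Ioi T, (F1 t - F2 t) = 0 := by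
    rw [setIntegral_congr_fun measurableSet_Ioi (g := fun _ => (0:ℝ)) ?_, integral_zero]
    intro t ht
    have hTt : T ≤ t := le_of_lt ht
    have hfilt : (X.filter (fun x => t < φ x)) = ∅ :=
      Finset.filter_false_of_mem fun x _ => not_lt.2 ((hφT x).trans hTt)
    simp only [hF1def, hfilt, Finset.card_empty, Nat.cast_zero, mul_zero, hF2zero t hTt, sub_zero]
  have hsplit : ∫ t in Ioi (0:ℝ), (F1 t - F2 t)
      = ∫ t in Ioc (0:ℝ) T, (F1 t - F2 t) := by
    rw [← Ioc_union_Ioi_eq_Ioi hT.le,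
      setIntegral_union (Ioc_disjoint_Ioi le_rfl) measurableSet_Ioi
        (hF12.mono_set Ioc_subset_Ioi_self)
        (hF12.mono_set (Ioi_subset_Ioi hT.le)), hzero, add_zero]
  rw [hLHS, hsplit]
  have hbound := norm_setIntegral_le_of_norm_le_const (μ := volume) (s := Ioc (0:ℝ) T)
    (f := fun t => F1 t - F2 t) (C := 2 * D)
    (by rw [Real.volume_Ioc]; exact ENNReal.ofReal_lt_top) hptwise
  rw [Real.norm_eq_abs] at hbound
  calc |∫ t in Ioc (0:ℝ) T, (F1 t - F2 t)| ≤ 2 * D * (volume (Ioc (0:ℝ) T)).toReal := hbound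
    _ = 2 * D * T := by rw [Real.volume_Ioc, sub_zero, ENNReal.toReal_ofReal hT.le]

lemma tail_bound {M : Type*} [MetricSpace M] [MeasurableSpace M] [BorelSpace M]
    (σ : Measure M) [IsProbabilityMeasure σ]
    {s Δ Ctop : ℝ} {d : ℕ} (hs0 : 0 < s) (hsd : s < d) (hΔ : 0 < Δ) (hCtop : 0 < Ctop)
    (hup : ∀ (c : M) (r : ℝ), 0 < r → r ≤ Δ → (σ (ball c r)).toReal ≤ Ctop * r ^ d)
    (x : M) {T : ℝ} (hT0 : 0 < T) (hTΔ : Δ ^ (-s) ≤ T) :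
    Integrable (fun z => dist z x ^ (-s)) σ ∧
    0 ≤ (∫ z, dist z x ^ (-s) ∂σ) - ∫ z, min (dist z x ^ (-s)) T ∂σ ∧
    (∫ z, dist z x ^ (-s) ∂σ) - ∫ z, min (dist z x ^ (-s)) T ∂σ
      ≤ (Ctop * (1 + s / ((d:ℝ) - s))) * T ^ ((-s)⁻¹ * (d:ℝ) + 1) := by
  have hd0 : (0:ℝ) < d := hs0.trans hsd
  have hsne : -s ≠ 0 := by intro h; rw [neg_eq_zero] at h; exact hs0.ne' h
  set e : ℝ := (-s)⁻¹ * d with hedef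
  have he : e < -1 := by
    rw [hedef, inv_neg, neg_mul, neg_lt_neg_iff, ← div_eq_inv_mul, lt_div_iff₀ hs0, one_mul]
    exact hsd
  have he0 : e < 0 := he.trans (by norm_num)
  have he1 : e + 1 < 0 := by linarith
  set k : M → ℝ := fun z => dist z x ^ (-s) with hkdef
  have hk0 : ∀ z, 0 ≤ k z := fun z => Real.rpow_nonneg dist_nonneg _
  have hkm : Measurable k := by
    have h1 : Measurable fun u : ℝ => u ^ (-s) := by measurability
    exact h1.comp (continuous_id.dist continuous_const).measurable
  -- superlevel measure bound
  have hsup : ∀ t : ℝ, Δ ^ (-s) ≤ t → σ {z | t < k z} ≤ ENNReal.ofReal (Ctop * t ^ e) := by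
    intro t hts
    have hΔs : 0 < Δ ^ (-s) := Real.rpow_pos_of_pos hΔ _
    have ht0 : 0 < t := lt_of_lt_of_le hΔs hts
    have hz : (-s)⁻¹ < 0 := inv_lt_zero.2 (neg_lt_zero.2 hs0)
    have hr0 : 0 < t ^ (-s)⁻¹ := Real.rpow_pos_of_pos ht0 _
    have hrΔ : t ^ (-s)⁻¹ ≤ Δ := by
      have h1 : t ^ (-s)⁻¹ ≤ (Δ ^ (-s)) ^ (-s)⁻¹ :=
        (Real.rpow_le_rpow_iff_of_neg ht0 hΔs hz).2 hts
      rwa [← Real.rpow_mul hΔ.le, mul_inv_cancel₀ hsne, Real.rpow_one] at h1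
    have hsub : {z | t < k z} ⊆ ball x (t ^ (-s)⁻¹) := by
      rw [hkdef]
      rw [superlevel_eq hs0 ht0 x]
      exact diff_subset
    calc σ {z | t < k z} ≤ σ (ball x (t ^ (-s)⁻¹)) := measure_mono hsub
      _ ≤ ENNReal.ofReal (Ctop * t ^ e) := by
        rw [ENNReal.le_ofReal_iff_toReal_le (measure_ne_top σ _) (by positivity)]
        refine (hup x _ hr0 hrΔ).trans ?_
        have hre : (t ^ (-s)⁻¹) ^ d = t ^ e := by
          rw [hedef, ← Real.rpow_natCast (t ^ (-s)⁻¹) d, ← Real.rpow_mul ht0.le]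
        rw [hre]
  -- integrability of k
  have hkint : Integrable k σ := by
    refine ⟨hkm.aestronglyMeasurable, ?_⟩
    rw [hasFiniteIntegral_iff_ofReal (Eventually.of_forall hk0),
      lintegral_eq_lintegral_meas_lt σ (Eventually.of_forall hk0) hkm.aemeasurable]
    have hT'0 : 0 < Δ ^ (-s) := Real.rpow_pos_of_pos hΔ _
    rw [← Ioc_union_Ioi_eq_Ioi hT'0.le, lintegral_union measurableSet_Ioi (Ioc_disjoint_Ioi le_rfl)]
    have h1 : ∫⁻ t in Ioc (0:ℝ) (Δ ^ (-s)), σ {z | t < k z} ≤ ENNReal.ofReal (Δ ^ (-s)) := by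
      calc ∫⁻ t in Ioc (0:ℝ) (Δ ^ (-s)), σ {z | t < k z}
          ≤ ∫⁻ _ in Ioc (0:ℝ) (Δ ^ (-s)), 1 := lintegral_mono fun t => prob_le_one
        _ = volume (Ioc (0:ℝ) (Δ ^ (-s))) := setLIntegral_one _
        _ = ENNReal.ofReal (Δ ^ (-s)) := by rw [Real.volume_Ioc, sub_zero]
    have hint2 : IntegrableOn (fun t : ℝ => Ctop * t ^ e) (Ioi (Δ ^ (-s))) volume :=
      (integrableOn_Ioi_rpow_of_lt he hT'0).const_mul Ctop
    have h2 : ∫⁻ t in Ioi (Δ ^ (-s)), σ {z | t < k z}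
        ≤ ENNReal.ofReal (∫ t in Ioi (Δ ^ (-s)), Ctop * t ^ e) := by
      rw [ofReal_integral_eq_lintegral_ofReal hint2 ?_]
      · refine lintegral_mono_ae ?_
        filter_upwards [ae_restrict_mem measurableSet_Ioi] with t ht
        exact hsup t (le_of_lt ht)
      · filter_upwards [ae_restrict_mem measurableSet_Ioi] with t ht
        exact mul_nonneg hCtop.le (Real.rpow_nonneg (le_of_lt (hT'0.trans ht)) e)
    exact lt_of_le_of_lt (add_le_add h1 h2)
      (ENNReal.add_lt_top.2 ⟨ENNReal.ofReal_lt_top, ENNReal.ofReal_lt_top⟩)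
  -- min is integrable
  have hφm : Measurable (fun z => min (k z) T) := hkm.min measurable_const
  have hφ0 : ∀ z, 0 ≤ min (k z) T := fun z => le_min (hk0 z) hT0.le
  have hφint : Integrable (fun z => min (k z) T) σ :=
    (integrable_const T).mono' hφm.aestronglyMeasurable
      (Eventually.of_forall fun z => by
        rw [Real.norm_eq_abs, abs_of_nonneg (hφ0 z)]; exact min_le_right _ _)
  have hψ0 : ∀ z, 0 ≤ k z - min (k z) T := fun z => sub_nonneg.2 (min_le_left _ _)
  have hψint : Integrable (fun z => k z - min (k z) T) σ := hkint.sub hφint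
  have hsubrep : (∫ z, k z ∂σ) - ∫ z, min (k z) T ∂σ
      = ∫ t in Ioi (0:ℝ), (σ {z | t < k z - min (k z) T}).toReal := by
    rw [← integral_sub hkint hφint]
    exact hψint.integral_eq_integral_meas_lt (Eventually.of_forall hψ0)
  have hnn : 0 ≤ (∫ z, k z ∂σ) - ∫ z, min (k z) T ∂σ := by
    rw [← integral_sub hkint hφint]
    exact integral_nonneg hψ0
  have hsetψ : ∀ t : ℝ, 0 < t → {z | t < k z - min (k z) T} = {z | t + T < k z} := by
    intro t ht; ext z
    simp only [mem_setOf_eq]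
    rcases le_or_gt (k z) T with h | h
    · rw [min_eq_left h]
      constructor <;> intro hc <;> linarith
    · rw [min_eq_right h.le]
      constructor <;> intro hc <;> linarith
  have hmono : ∀ t ∈ Ioi (0:ℝ), (σ {z | t < k z - min (k z) T}).toReal ≤ Ctop * (max t T) ^ e := by
    intro t ht
    rw [mem_Ioi] at ht
    rw [hsetψ t ht]
    have h1 : σ {z | t + T < k z} ≤ ENNReal.ofReal (Ctop * (t + T) ^ e) :=
      hsup _ (by linarith)
    have h2 : (σ {z | t + T < k z}).toReal ≤ Ctop * (t + T) ^ e :=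
      ENNReal.toReal_le_of_le_ofReal (by positivity) h1
    refine h2.trans ?_
    have hmax0 : 0 < max t T := lt_of_lt_of_le hT0 (le_max_right t T)
    have h3 : (t + T) ^ e ≤ (max t T) ^ e :=
      (Real.rpow_le_rpow_iff_of_neg (by linarith) hmax0 he0).2
        (max_le (by linarith) (by linarith))
    exact mul_le_mul_of_nonneg_left h3 hCtop.le
  -- integrable majorant
  have hint1 : IntegrableOn (fun t : ℝ => Ctop * (max t T) ^ e) (Ioc (0:ℝ) T) volume := by
    refine MeasureTheory.IntegrableOn.congr_fun
      (f := fun _ : ℝ => Ctop * T ^ e) ?_ ?_ measurableSet_Ioc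
    · exact integrableOn_const (by rw [Real.volume_Ioc]; exact ENNReal.ofReal_ne_top)
    · intro t ht
      simp only [max_eq_right ht.2]
  have hint2 : IntegrableOn (fun t : ℝ => Ctop * (max t T) ^ e) (Ioi T) volume := by
    refine MeasureTheory.IntegrableOn.congr_fun
      (f := fun t : ℝ => Ctop * t ^ e) ((integrableOn_Ioi_rpow_of_lt he hT0).const_mul Ctop)
      ?_ measurableSet_Ioi
    intro t ht
    simp only [max_eq_left (le_of_lt (mem_Ioi.1 ht))]
  have hinth : IntegrableOn (fun t : ℝ => Ctop * (max t T) ^ e) (Ioi (0:ℝ)) volume := by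
    have := hint1.union hint2
    rwa [Ioc_union_Ioi_eq_Ioi hT0.le] at this
  have hbound : (∫ z, k z ∂σ) - ∫ z, min (k z) T ∂σ
      ≤ ∫ t in Ioi (0:ℝ), Ctop * (max t T) ^ e := by
    rw [hsubrep]
    refine integral_mono_of_nonneg (Eventually.of_forall fun t => ENNReal.toReal_nonneg) hinth ?_
    filter_upwards [ae_restrict_mem measurableSet_Ioi] with t ht using hmono t ht
  have hval : ∫ t in Ioi (0:ℝ), Ctop * (max t T) ^ e
      = Ctop * T ^ (e + 1) + Ctop * (-(T ^ (e + 1)) / (e + 1)) := by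
    rw [← Ioc_union_Ioi_eq_Ioi hT0.le,
      setIntegral_union (Ioc_disjoint_Ioi le_rfl) measurableSet_Ioi hint1 hint2]
    congr 1
    · rw [setIntegral_congr_fun measurableSet_Ioc (g := fun _ : ℝ => Ctop * T ^ e)
        (fun t ht => by simp only [max_eq_right ht.2]),
        setIntegral_const, measureReal_def, Real.volume_Ioc, sub_zero, ENNReal.toReal_ofReal hT0.le, smul_eq_mul,
        Real.rpow_add_one hT0.ne']
      ring
    · rw [setIntegral_congr_fun measurableSet_Ioi (g := fun t : ℝ => Ctop * t ^ e)
        (fun t ht => by simp only [max_eq_left (le_of_lt (mem_Ioi.1 ht))]),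
        integral_const_mul, integral_Ioi_rpow_of_lt he hT0]
  have hkey : -(T ^ (e + 1)) / (e + 1) = (s / ((d:ℝ) - s)) * T ^ (e + 1) := by
    have hne : e + 1 ≠ 0 := ne_of_lt he1
    have hprod : (s / ((d:ℝ) - s)) * (e + 1) = -1 := by
      have h1 : s ≠ 0 := hs0.ne'
      have h2 : (d:ℝ) - s ≠ 0 := by intro h; apply hsd.ne; linarith
      rw [hedef, inv_neg]
      field_simp
      ring
    have hthis : (s / ((d:ℝ) - s)) * T ^ (e + 1) * (e + 1) = -(T ^ (e + 1)) := by
      rw [mul_comm (s / ((d:ℝ) - s)) (T ^ (e + 1)), mul_assoc, hprod]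
      ring
    rw [div_eq_iff hne]
    exact hthis.symm
  refine ⟨hkint, hnn, ?_⟩
  calc (∫ z, k z ∂σ) - ∫ z, min (k z) T ∂σ
      ≤ Ctop * T ^ (e + 1) + Ctop * (-(T ^ (e + 1)) / (e + 1)) := hval ▸ hbound
    _ = (Ctop * (1 + s / ((d:ℝ) - s))) * T ^ (e + 1) := by rw [hkey]; ring


variable {M : Type*} [MetricSpace M] [MeasurableSpace M]

lemma term_le_one (σ : Measure M) [IsProbabilityMeasure σ] (X : Finset M) (y : M) (r : ℝ) :
    |(((X : Set M) ∩ ball y r).ncard : ℝ) / X.card - (σ (ball y r)).toReal| ≤ 1 := by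
  have ha0 : (0:ℝ) ≤ (((X : Set M) ∩ ball y r).ncard : ℝ) / X.card := by positivity
  have ha1 : (((X : Set M) ∩ ball y r).ncard : ℝ) / X.card ≤ 1 := by
    rcases Nat.eq_zero_or_pos X.card with hc | hc
    · rw [Finset.card_eq_zero] at hc
      subst hc
      simp
    · rw [div_le_one (by exact_mod_cast hc)]
      have h1 : ((X : Set M) ∩ ball y r).ncard ≤ (X : Set M).ncard :=
        Set.ncard_le_ncard inter_subset_left X.finite_toSet
      rw [Set.ncard_coe_finset] at h1
      exact_mod_cast h1
  have hb0 : (0:ℝ) ≤ (σ (ball y r)).toReal := ENNReal.toReal_nonneg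
  have hb1 : (σ (ball y r)).toReal ≤ 1 := by
    have := ENNReal.toReal_mono (measure_ne_top σ univ) (measure_mono (subset_univ (ball y r)))
    simpa [measure_univ] using this
  rw [abs_sub_le_iff]
  constructor <;> linarith

lemma le_ballDisc (σ : Measure M) [IsProbabilityMeasure σ] (X : Finset M) (y : M) {r : ℝ}
    (hr : 0 < r) :
    |(((X : Set M) ∩ ball y r).ncard : ℝ) / X.card - (σ (ball y r)).toReal| ≤ ballDisc σ X := by
  haveI : Nonempty (Set.Ioi (0:ℝ)) := ⟨⟨1, by norm_num⟩⟩
  have hbdd : ∀ y' : M, BddAbove (Set.range fun r' : Set.Ioi (0:ℝ) =>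
      |(((X : Set M) ∩ ball y' (r' : ℝ)).ncard : ℝ) / X.card - (σ (ball y' (r' : ℝ))).toReal|) := by
    intro y'
    refine ⟨1, ?_⟩
    rintro v ⟨r', rfl⟩
    exact term_le_one σ X y' (r' : ℝ)
  have h1 : |(((X : Set M) ∩ ball y r).ncard : ℝ) / X.card - (σ (ball y r)).toReal|
      ≤ ⨆ r' : Set.Ioi (0:ℝ),
        |(((X : Set M) ∩ ball y (r' : ℝ)).ncard : ℝ) / X.card - (σ (ball y (r' : ℝ))).toReal| :=
    le_ciSup (hbdd y) ⟨r, hr⟩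
  refine h1.trans ?_
  refine le_ciSup (f := fun y' : M => ⨆ r' : Set.Ioi (0:ℝ),
    |(((X : Set M) ∩ ball y' (r' : ℝ)).ncard : ℝ) / X.card - (σ (ball y' (r' : ℝ))).toReal|) ?_ y
  refine ⟨1, ?_⟩
  rintro v ⟨y', rfl⟩
  exact ciSup_le fun r' => term_le_one σ X y' (r' : ℝ)

lemma sing_zero [BorelSpace M] (σ : Measure M) [IsProbabilityMeasure σ]
    {Δ Ctop : ℝ} {d : ℕ} (hd : 1 ≤ d) (hΔ : 0 < Δ) (hCtop : 0 < Ctop)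
    (hup : ∀ (c : M) (r : ℝ), 0 < r → r ≤ Δ → (σ (ball c r)).toReal ≤ Ctop * r ^ d)
    (y : M) : σ {y} = 0 := by
  have key : ∀ ε : ℝ, 0 < ε → (σ {y}).toReal ≤ ε := by
    intro ε hε
    set r : ℝ := min Δ ((ε / Ctop) ^ ((d:ℝ)⁻¹)) with hrdef
    have hr0 : 0 < r := lt_min hΔ (Real.rpow_pos_of_pos (by positivity) _)
    have hrΔ : r ≤ Δ := min_le_left _ _
    have hsub : ({y} : Set M) ⊆ ball y r := by
      intro z hz
      rw [mem_singleton_iff] at hz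
      subst hz
      simpa [mem_ball] using hr0
    have h1 : (σ {y}).toReal ≤ (σ (ball y r)).toReal :=
      ENNReal.toReal_mono (measure_ne_top σ _) (measure_mono hsub)
    have h2 : Ctop * r ^ d ≤ ε := by
      have hrle : r ≤ (ε / Ctop) ^ ((d:ℝ)⁻¹) := min_le_right _ _
      have h3 : r ^ d ≤ ((ε / Ctop) ^ ((d:ℝ)⁻¹)) ^ d :=
        pow_le_pow_left₀ hr0.le hrle d
      have h4 : ((ε / Ctop) ^ ((d:ℝ)⁻¹)) ^ d = ε / Ctop :=
        Real.rpow_inv_natCast_pow (by positivity) (by omega)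
      rw [h4] at h3
      calc Ctop * r ^ d ≤ Ctop * (ε / Ctop) := by
            exact mul_le_mul_of_nonneg_left h3 hCtop.le
        _ = ε := by field_simp
    have := h1.trans ((hup y r hr0 hrΔ).trans h2)
    exact this
  have h0 : (σ {y}).toReal = 0 := by
    by_contra h
    have hpos : 0 < (σ {y}).toReal := lt_of_le_of_ne ENNReal.toReal_nonneg (Ne.symm h)
    have := key ((σ {y}).toReal / 2) (by linarith)
    linarith
  have := ENNReal.toReal_eq_zero_iff (σ {y})
  rw [this] at h0
  rcases h0 with h | h
  · exact h
  · exact absurd h (measure_ne_top σ _)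

lemma inv_card_le_disc [BorelSpace M] (σ : Measure M) [IsProbabilityMeasure σ]
    {Δ Ctop : ℝ} {d : ℕ} (hd : 1 ≤ d) (hΔ : 0 < Δ) (hCtop : 0 < Ctop)
    (hup : ∀ (c : M) (r : ℝ), 0 < r → r ≤ Δ → (σ (ball c r)).toReal ≤ Ctop * r ^ d)
    (X : Finset M) (hX : X.Nonempty) :
    1 / (X.card : ℝ) ≤ ballDisc σ X := by
  obtain ⟨x, hx⟩ := hX
  have hNpos : (0:ℝ) < X.card := by exact_mod_cast Finset.card_pos.mpr ⟨x, hx⟩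
  by_contra hcon
  push_neg at hcon
  set ε : ℝ := 1 / (X.card : ℝ) - ballDisc σ X with hεdef
  have hε : 0 < ε := by
    simp only [hεdef]
    linarith
  set r : ℝ := min Δ ((ε / (2 * Ctop)) ^ ((d:ℝ)⁻¹)) with hrdef
  have hr0 : 0 < r := lt_min hΔ (Real.rpow_pos_of_pos (by positivity) _)
  have hrΔ : r ≤ Δ := min_le_left _ _
  have hσ : (σ (ball x r)).toReal ≤ ε / 2 := by
    have hrle : r ≤ (ε / (2 * Ctop)) ^ ((d:ℝ)⁻¹) := min_le_right _ _
    have h3 : r ^ d ≤ ((ε / (2 * Ctop)) ^ ((d:ℝ)⁻¹)) ^ d := pow_le_pow_left₀ hr0.le hrle d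
    have h4 : ((ε / (2 * Ctop)) ^ ((d:ℝ)⁻¹)) ^ d = ε / (2 * Ctop) :=
      Real.rpow_inv_natCast_pow (by positivity) (by omega)
    rw [h4] at h3
    refine (hup x r hr0 hrΔ).trans ?_
    calc Ctop * r ^ d ≤ Ctop * (ε / (2 * Ctop)) := mul_le_mul_of_nonneg_left h3 hCtop.le
      _ = ε / 2 := by field_simp
  have hone : (1:ℝ) ≤ (((X : Set M) ∩ ball x r).ncard : ℝ) := by
    have hne : ((X : Set M) ∩ ball x r).Nonempty := ⟨x, hx, by simpa [mem_ball] using hr0⟩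
    have hfin : ((X : Set M) ∩ ball x r).Finite := X.finite_toSet.inter_of_left _
    have := (Set.ncard_pos hfin).2 hne
    exact_mod_cast this
  have hterm := le_ballDisc σ X x hr0
  have hlow : 1 / (X.card : ℝ) - ε / 2
      ≤ (((X : Set M) ∩ ball x r).ncard : ℝ) / X.card - (σ (ball x r)).toReal := by
    have : 1 / (X.card : ℝ) ≤ (((X : Set M) ∩ ball x r).ncard : ℝ) / X.card := by
      rw [div_le_div_iff₀ hNpos hNpos]
      nlinarith
    linarith
  have : 1 / (X.card : ℝ) - ε / 2 ≤ ballDisc σ X := by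
    refine le_trans hlow (le_trans (le_abs_self _) hterm)
  simp only [hεdef] at this
  linarith



end AuxLemmas

set_option maxHeartbeats 1000000 in
open Set in
open scoped ENNReal in
theorem quadrature_error_mean_potential
    {M : Type*} [MetricSpace M] [CompactSpace M] [ConnectedSpace M] [Nontrivial M]
    [MeasurableSpace M] [BorelSpace M]
    (d : ℕ) (hd : 1 ≤ d)
    (σ : Measure M) [IsProbabilityMeasure σ]
    -- Regularity hypothesis
    (Cbot Ctop : ℝ) (hCbot : 0 < Cbot) (hCbotTop : Cbot ≤ Ctop)
    (hreg : ∀ (x : M) (r : ℝ), 0 < r → r ≤ diam (Set.univ : Set M) →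
      Cbot * r ^ d ≤ (σ (ball x r)).toReal ∧ (σ (ball x r)).toReal ≤ Ctop * r ^ d)
    -- Blümlinger density hypothesis
    (R0 C0 κ : ℝ) (hR0 : 0 < R0) (hC0 : 0 < C0) (hκ : 0 < κ)
    (hblum : ∀ (x : M) (r : ℝ), 0 < r → r < R0 →
      |(σ (ball x r)).toReal - κ * r ^ d| ≤ C0 * κ * r ^ (d + 2))
    (s : ℝ) (hs0 : 0 < s) (hsd : s < d) :
    ∃ C > (0 : ℝ), ∃ D0 : ℝ, 0 < D0 ∧ D0 < 1 ∧
      ∀ X : Finset M, X.Nonempty → ∀ D : ℝ, 0 < D → D ≤ D0 → ballDisc σ X ≤ D →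
        |(1 / (X.card : ℝ)) * ∑ x ∈ X, (∫ y, dist x y ^ (-s) ∂σ) -
            ∫ x, (∫ y, dist x y ^ (-s) ∂σ) ∂σ| ≤
          C * D ^ (((d : ℝ) - s) / ((d : ℝ) ^ 2 + 2 * d - s)) := by
  have hd0 : (0:ℝ) < d := by
    have : 0 < d := by omega
    exact_mod_cast this
  set Δ : ℝ := diam (Set.univ : Set M) with hΔdef
  have hΔ : 0 < Δ := by
    obtain ⟨a, b, hab⟩ := exists_pair_ne M
    have h1 : 0 < dist a b := dist_pos.2 hab
    exact h1.trans_le (dist_le_diam_of_mem isCompact_univ.isBounded (mem_univ a) (mem_univ b))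
  have hCtop : 0 < Ctop := lt_of_lt_of_le hCbot hCbotTop
  have hup : ∀ (c : M) (r : ℝ), 0 < r → r ≤ Δ → (σ (ball c r)).toReal ≤ Ctop * r ^ d :=
    fun c r h1 h2 => (hreg c r h1 h2).2
  have hds : (0:ℝ) < (d:ℝ) - s := by linarith
  set c2 : ℝ := Ctop * (1 + s / ((d:ℝ) - s)) with hc2def
  have hc2 : 0 < c2 := by
    have h1 : 0 < s / ((d:ℝ) - s) := div_pos hs0 hds
    have h2 : (0:ℝ) < 1 + s / ((d:ℝ) - s) := by linarith
    exact mul_pos hCtop h2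
  refine ⟨2 + 2 * c2, by linarith, min (1/2) (Δ ^ d), by positivity,
    lt_of_le_of_lt (min_le_left _ _) (by norm_num), ?_⟩
  intro X hX D hD hDle hdiscle
  have hD1 : D ≤ 1/2 := hDle.trans (min_le_left _ _)
  have hDΔ : D ≤ Δ ^ d := hDle.trans (min_le_right _ _)
  have hNpos : (0:ℝ) < X.card := by exact_mod_cast Finset.card_pos.mpr hX
  have hdisc : ∀ (y : M) (r : ℝ), 0 < r →
      |(((X : Set M) ∩ ball y r).ncard : ℝ) / X.card - (σ (ball y r)).toReal| ≤ D :=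
    fun y r hr => (le_ballDisc σ X y hr).trans hdiscle
  have hN : 1 / (X.card : ℝ) ≤ D := (inv_card_le_disc σ hd hΔ hCtop hup X hX).trans hdiscle
  have hsing : ∀ y : M, σ {y} = 0 := sing_zero σ hd hΔ hCtop hup
  set T : ℝ := D ^ (-s / (d:ℝ)) with hTdef
  have hT0 : 0 < T := Real.rpow_pos_of_pos hD _
  have hTΔ : Δ ^ (-s) ≤ T := by
    have hz : -s / (d:ℝ) < 0 := div_neg_of_neg_of_pos (by linarith) hd0
    have h1 : (Δ ^ d : ℝ) ^ (-s / (d:ℝ)) ≤ D ^ (-s / (d:ℝ)) :=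
      (Real.rpow_le_rpow_iff_of_neg (by positivity) hD hz).2 hDΔ
    have h2 : (d:ℝ) * (-s / d) = -s := by field_simp
    calc Δ ^ (-s) = ((Δ : ℝ) ^ d) ^ (-s / (d:ℝ)) := by
          rw [← Real.rpow_natCast Δ d, ← Real.rpow_mul hΔ.le, h2]
      _ ≤ T := h1
  set ee : ℝ := (-s)⁻¹ * (d:ℝ) + 1 with heedef
  have htail : ∀ x : M,
      (0 ≤ (∫ z, dist x z ^ (-s) ∂σ) - ∫ z, min (dist x z ^ (-s)) T ∂σ) ∧
      ((∫ z, dist x z ^ (-s) ∂σ) - (∫ z, min (dist x z ^ (-s)) T ∂σ) ≤ c2 * T ^ ee) := by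
    intro x
    have h := tail_bound σ hs0 hsd hΔ hCtop hup x hT0 hTΔ
    rw [show (fun z : M => dist z x ^ (-s)) = fun z : M => dist x z ^ (-s) from
        funext fun z => by rw [dist_comm],
      show (fun z : M => min (dist z x ^ (-s)) T) = fun z : M => min (dist x z ^ (-s)) T from
        funext fun z => by rw [dist_comm]] at h
    exact ⟨h.2.1, h.2.2⟩
  have hrpow : Measurable fun u : ℝ => u ^ (-s) := by measurability
  have hker : Measurable fun p : M × M => dist p.1 p.2 ^ (-s) :=
    hrpow.comp continuous_dist.measurable
  have hkerT : Measurable fun p : M × M => min (dist p.1 p.2 ^ (-s)) T :=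
    hker.min measurable_const
  have hmin0 : ∀ (u : ℝ), 0 ≤ u → 0 ≤ min (u ^ (-s)) T := fun u hu =>
    le_min (Real.rpow_nonneg hu _) hT0.le
  have hVzint : ∀ x : M, Integrable (fun z => min (dist x z ^ (-s)) T) σ := by
    intro x
    have hm : Measurable fun z : M => min (dist x z ^ (-s)) T :=
      (hrpow.comp (continuous_const.dist continuous_id).measurable).min measurable_const
    exact (integrable_const T).mono' hm.aestronglyMeasurable
      (Eventually.of_forall fun z => by
        rw [Real.norm_eq_abs, abs_of_nonneg (hmin0 _ dist_nonneg)]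
        exact min_le_right _ _)
  have hVxint : ∀ z : M, Integrable (fun x => min (dist x z ^ (-s)) T) σ := by
    intro z
    have hm : Measurable fun x : M => min (dist x z ^ (-s)) T :=
      (hrpow.comp (continuous_id.dist continuous_const).measurable).min measurable_const
    exact (integrable_const T).mono' hm.aestronglyMeasurable
      (Eventually.of_forall fun x => by
        rw [Real.norm_eq_abs, abs_of_nonneg (hmin0 _ dist_nonneg)]
        exact min_le_right _ _)
  have hV0 : ∀ x : M, 0 ≤ ∫ z, min (dist x z ^ (-s)) T ∂σ :=
    fun x => integral_nonneg fun z => hmin0 _ dist_nonneg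
  have hVT : ∀ x : M, (∫ z, min (dist x z ^ (-s)) T ∂σ) ≤ T := by
    intro x
    calc ∫ z, min (dist x z ^ (-s)) T ∂σ ≤ ∫ _, T ∂σ :=
        integral_mono (hVzint x) (integrable_const T) fun z => min_le_right _ _
      _ = T := by simp
  have hUsm : StronglyMeasurable fun x : M => ∫ z, dist x z ^ (-s) ∂σ :=
    hker.stronglyMeasurable.integral_prod_right'
  have hVsm : StronglyMeasurable fun x : M => ∫ z, min (dist x z ^ (-s)) T ∂σ :=
    hkerT.stronglyMeasurable.integral_prod_right'
  have hU0 : ∀ x : M, 0 ≤ ∫ z, dist x z ^ (-s) ∂σ := by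
    intro x
    have h1 := (htail x).1
    have h2 := hV0 x
    linarith
  have hUb : ∀ x : M, (∫ z, dist x z ^ (-s) ∂σ) ≤ T + c2 * T ^ ee := by
    intro x
    have h1 := (htail x).2
    have h2 := hVT x
    linarith
  have hUint : Integrable (fun x : M => ∫ z, dist x z ^ (-s) ∂σ) σ :=
    (integrable_const (T + c2 * T ^ ee)).mono' hUsm.aestronglyMeasurable
      (Eventually.of_forall fun x => by
        rw [Real.norm_eq_abs, abs_of_nonneg (hU0 x)]; exact hUb x)
  have hVint : Integrable (fun x : M => ∫ z, min (dist x z ^ (-s)) T ∂σ) σ :=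
    (integrable_const T).mono' hVsm.aestronglyMeasurable
      (Eventually.of_forall fun x => by
        rw [Real.norm_eq_abs, abs_of_nonneg (hV0 x)]; exact hVT x)
  -- Term 3 : integral tail
  have hT3 : 0 ≤ (∫ x, (∫ z, dist x z ^ (-s) ∂σ) ∂σ)
        - (∫ x, (∫ z, min (dist x z ^ (-s)) T ∂σ) ∂σ)
      ∧ (∫ x, (∫ z, dist x z ^ (-s) ∂σ) ∂σ)
        - (∫ x, (∫ z, min (dist x z ^ (-s)) T ∂σ) ∂σ) ≤ c2 * T ^ ee := by
    rw [← integral_sub hUint hVint]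
    constructor
    · exact integral_nonneg fun x => (htail x).1
    · calc ∫ x, ((∫ z, dist x z ^ (-s) ∂σ) - ∫ z, min (dist x z ^ (-s)) T ∂σ) ∂σ
          ≤ ∫ _, c2 * T ^ ee ∂σ :=
            integral_mono (hUint.sub hVint) (integrable_const _) fun x => (htail x).2
        _ = c2 * T ^ ee := by simp
  -- Fubini part
  have hprodint : Integrable (fun p : M × M => min (dist p.1 p.2 ^ (-s)) T) (σ.prod σ) :=
    (integrable_const T).mono' hkerT.aestronglyMeasurable
      (Eventually.of_forall fun p => by
        rw [Real.norm_eq_abs, abs_of_nonneg (hmin0 _ dist_nonneg)]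
        exact min_le_right _ _)
  have hswap : (∫ x, (∫ z, min (dist x z ^ (-s)) T ∂σ) ∂σ)
      = ∫ z, (∫ x, min (dist x z ^ (-s)) T ∂σ) ∂σ :=
    integral_integral_swap hprodint
  have hsum_swap : (X.card : ℝ)⁻¹ * (∑ x ∈ X, ∫ z, min (dist x z ^ (-s)) T ∂σ)
      = ∫ z, ((X.card : ℝ)⁻¹ * ∑ x ∈ X, min (dist x z ^ (-s)) T) ∂σ := by
    rw [← integral_finset_sum X fun x _ => hVzint x, ← integral_const_mul]
  have hin1 : Integrable (fun z : M => (X.card : ℝ)⁻¹ * ∑ x ∈ X, min (dist x z ^ (-s)) T) σ := by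
    have hm : Measurable fun z : M => (X.card : ℝ)⁻¹ * ∑ x ∈ X, min (dist x z ^ (-s)) T := by
      refine Measurable.const_mul ?_ _
      refine Finset.measurable_sum X fun x _ => ?_
      exact (hrpow.comp (continuous_const.dist continuous_id).measurable).min measurable_const
    refine (integrable_const T).mono' hm.aestronglyMeasurable (Eventually.of_forall fun z => ?_)
    have hnn : 0 ≤ (X.card : ℝ)⁻¹ * ∑ x ∈ X, min (dist x z ^ (-s)) T :=
      mul_nonneg (by positivity) (Finset.sum_nonneg fun x _ => hmin0 _ dist_nonneg)
    rw [Real.norm_eq_abs, abs_of_nonneg hnn]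
    have hsumle : (∑ x ∈ X, min (dist x z ^ (-s)) T) ≤ (X.card : ℝ) * T := by
      have := Finset.sum_le_card_nsmul X (fun x => min (dist x z ^ (-s)) T) T
        (fun x _ => min_le_right _ _)
      rwa [nsmul_eq_mul] at this
    calc (X.card : ℝ)⁻¹ * ∑ x ∈ X, min (dist x z ^ (-s)) T
        ≤ (X.card : ℝ)⁻¹ * ((X.card : ℝ) * T) :=
          mul_le_mul_of_nonneg_left hsumle (by positivity)
      _ = T := by
          rw [← mul_assoc, inv_mul_cancel₀ hNpos.ne', one_mul]
  have hin2 : Integrable (fun z : M => ∫ x, min (dist x z ^ (-s)) T ∂σ) σ := by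
    have hsm2 : StronglyMeasurable fun z : M => ∫ x, min (dist x z ^ (-s)) T ∂σ :=
      hkerT.stronglyMeasurable.integral_prod_left'
    refine (integrable_const T).mono' hsm2.aestronglyMeasurable
      (Eventually.of_forall fun z => ?_)
    have h0 : 0 ≤ ∫ x, min (dist x z ^ (-s)) T ∂σ :=
      integral_nonneg fun x => hmin0 _ dist_nonneg
    rw [Real.norm_eq_abs, abs_of_nonneg h0]
    calc ∫ x, min (dist x z ^ (-s)) T ∂σ ≤ ∫ _, T ∂σ :=
        integral_mono (hVxint z) (integrable_const T) fun x => min_le_right _ _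
      _ = T := by simp
  have hP2 : |(X.card : ℝ)⁻¹ * (∑ x ∈ X, ∫ z, min (dist x z ^ (-s)) T ∂σ)
      - ∫ x, (∫ z, min (dist x z ^ (-s)) T ∂σ) ∂σ| ≤ 2 * D * T := by
    rw [hsum_swap, hswap, ← integral_sub hin1 hin2]
    have hb := norm_integral_le_of_norm_le_const (μ := σ)
      (f := fun z => (X.card : ℝ)⁻¹ * (∑ x ∈ X, min (dist x z ^ (-s)) T)
        - ∫ x, min (dist x z ^ (-s)) T ∂σ) (C := 2 * D * T)
      (Eventually.of_forall fun z => by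
        rw [Real.norm_eq_abs]
        exact per_y_error σ hs0 hT0 hD X hX hdisc hN hsing z)
    rw [Real.norm_eq_abs] at hb
    simpa using hb
  -- Term 1 : discrete tail
  have hA1 : 0 ≤ (X.card : ℝ)⁻¹ * ∑ x ∈ X,
        ((∫ z, dist x z ^ (-s) ∂σ) - ∫ z, min (dist x z ^ (-s)) T ∂σ)
      ∧ (X.card : ℝ)⁻¹ * ∑ x ∈ X,
        ((∫ z, dist x z ^ (-s) ∂σ) - ∫ z, min (dist x z ^ (-s)) T ∂σ) ≤ c2 * T ^ ee := by
    constructor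
    · exact mul_nonneg (by positivity) (Finset.sum_nonneg fun x _ => (htail x).1)
    · have hsumle : (∑ x ∈ X, ((∫ z, dist x z ^ (-s) ∂σ) - ∫ z, min (dist x z ^ (-s)) T ∂σ))
          ≤ (X.card : ℝ) * (c2 * T ^ ee) := by
        have := Finset.sum_le_card_nsmul X
          (fun x => (∫ z, dist x z ^ (-s) ∂σ) - ∫ z, min (dist x z ^ (-s)) T ∂σ)
          (c2 * T ^ ee) (fun x _ => (htail x).2)
        rwa [nsmul_eq_mul] at this
      calc (X.card : ℝ)⁻¹ * ∑ x ∈ X,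
            ((∫ z, dist x z ^ (-s) ∂σ) - ∫ z, min (dist x z ^ (-s)) T ∂σ)
          ≤ (X.card : ℝ)⁻¹ * ((X.card : ℝ) * (c2 * T ^ ee)) :=
            mul_le_mul_of_nonneg_left hsumle (by positivity)
        _ = c2 * T ^ ee := by rw [← mul_assoc, inv_mul_cancel₀ hNpos.ne', one_mul]
  -- decomposition
  have hsplit : (∑ x ∈ X, ∫ z, dist x z ^ (-s) ∂σ)
      = (∑ x ∈ X, ((∫ z, dist x z ^ (-s) ∂σ) - ∫ z, min (dist x z ^ (-s)) T ∂σ))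
        + ∑ x ∈ X, ∫ z, min (dist x z ^ (-s)) T ∂σ := by
    rw [← Finset.sum_add_distrib]
    exact Finset.sum_congr rfl fun x _ => by ring
  have hdecomp : (1 / (X.card : ℝ)) * (∑ x ∈ X, ∫ z, dist x z ^ (-s) ∂σ)
      - ∫ x, (∫ z, dist x z ^ (-s) ∂σ) ∂σ
      = ((X.card : ℝ)⁻¹ * ∑ x ∈ X,
          ((∫ z, dist x z ^ (-s) ∂σ) - ∫ z, min (dist x z ^ (-s)) T ∂σ))
        + ((X.card : ℝ)⁻¹ * (∑ x ∈ X, ∫ z, min (dist x z ^ (-s)) T ∂σ)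
          - ∫ x, (∫ z, min (dist x z ^ (-s)) T ∂σ) ∂σ)
        + ((∫ x, (∫ z, min (dist x z ^ (-s)) T ∂σ) ∂σ)
          - ∫ x, (∫ z, dist x z ^ (-s) ∂σ) ∂σ) := by
    rw [one_div, hsplit]
    ring
  have hbound : |(1 / (X.card : ℝ)) * (∑ x ∈ X, ∫ z, dist x z ^ (-s) ∂σ)
      - ∫ x, (∫ z, dist x z ^ (-s) ∂σ) ∂σ| ≤ c2 * T ^ ee + 2 * D * T + c2 * T ^ ee := by
    rw [hdecomp]
    refine (abs_add_le _ _).trans ?_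
    refine add_le_add (( abs_add_le _ _).trans (add_le_add ?_ hP2)) ?_
    · rw [abs_of_nonneg hA1.1]
      exact hA1.2
    · rw [abs_sub_comm, abs_of_nonneg hT3.1]
      exact hT3.2
  -- final exponent computation
  have hTee : T ^ ee = D ^ (((d:ℝ) - s) / d) := by
    rw [hTdef, ← Real.rpow_mul hD.le]
    congr 1
    rw [heedef, inv_neg]
    field_simp
    ring
  have hDT : D * T = D ^ (((d:ℝ) - s) / d) := by
    nth_rewrite 1 [← Real.rpow_one D]
    rw [hTdef, ← Real.rpow_add hD]
    congr 1
    field_simp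
    ring
  have hαβ : ((d:ℝ) - s) / ((d:ℝ)^2 + 2*d - s) ≤ ((d:ℝ) - s) / d :=
    div_le_div_of_nonneg_left (by linarith) hd0 (by nlinarith [sq_nonneg ((d:ℝ))])
  have hpow : D ^ (((d:ℝ) - s) / d)
      ≤ D ^ (((d:ℝ) - s) / ((d:ℝ)^2 + 2*d - s)) :=
    Real.rpow_le_rpow_of_exponent_ge hD (by linarith) hαβ
  calc |(1 / (X.card : ℝ)) * (∑ x ∈ X, ∫ z, dist x z ^ (-s) ∂σ)
      - ∫ x, (∫ z, dist x z ^ (-s) ∂σ) ∂σ|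
      ≤ c2 * T ^ ee + 2 * D * T + c2 * T ^ ee := hbound
    _ = (2 + 2 * c2) * D ^ (((d:ℝ) - s) / d) := by
        rw [hTee, mul_assoc 2 D T, hDT]
        ring
    _ ≤ (2 + 2 * c2) * D ^ (((d:ℝ) - s) / ((d:ℝ)^2 + 2*d - s)) :=
        mul_le_mul_of_nonneg_left hpow (by linarith)
end
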